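/- arXiv:1209.1625 — 3 statements merged into one kernel-verified Lean document; each statement's English description precedes it below -/
import Mathlib

section
/- Under the permutation null distribution, for n ≥ 4 and 1 ≤ t ≤ n−1, the variance of the between-group edge count satisfies Var[R_G(t)] = p2(t)·|G| + (p1(t)/2 − p2(t))·Σ_i |G_i|² + (p2(t) − p1(t)²)·|G|². -/
open Finset Filter Asymptotics MeasureTheory Topology ProbabilityTheory

namespace GraphCP

noncomputable def edgeFS {n : ℕ} (G : SimpleGraph (Fin n)) : Finset (Sym2 (Fin n)) :=
  letI : DecidableRel G.Adj := Classical.decRel _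
  G.edgeFinset

noncomputable def deg {n : ℕ} (G : SimpleGraph (Fin n)) (i : Fin n) : ℕ :=
  letI : DecidableRel G.Adj := Classical.decRel _
  G.degree i

/-- Indicator that the two endpoints of an edge lie in different groups. -/
def crossInd {n : ℕ} (g : Fin n → Bool) : Sym2 (Fin n) → ℝ :=
  Sym2.lift ⟨fun i j => if g i ≠ g j then 1 else 0, by
    intro i j
    by_cases h : g i = g j <;> simp [h, Ne, eq_comm]⟩

/-- `g_i(t) = 1{π(i) > t}`, where the label of `i` is `π(i) = (f i).val + 1 ∈ {1,…,n}`. -/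
def gOne (n t : ℕ) (f : Fin n → Fin n) (i : Fin n) : Bool :=
  decide (t < (f i : ℕ) + 1)

/-- `g_i(t₁,t₂) = 1{t₁ < π(i) ≤ t₂}`. -/
def gTwo (n t₁ t₂ : ℕ) (f : Fin n → Fin n) (i : Fin n) : Bool :=
  decide (t₁ < (f i : ℕ) + 1 ∧ (f i : ℕ) + 1 ≤ t₂)

noncomputable def RoneF {n : ℕ} (G : SimpleGraph (Fin n)) (t : ℕ) (f : Fin n → Fin n) : ℝ :=
  ∑ e ∈ edgeFS G, crossInd (gOne n t f) e

noncomputable def Rone {n : ℕ} (G : SimpleGraph (Fin n)) (t : ℕ) (π : Equiv.Perm (Fin n)) : ℝ :=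
  RoneF G t ⇑π

noncomputable def Rtwo {n : ℕ} (G : SimpleGraph (Fin n)) (t₁ t₂ : ℕ)
    (π : Equiv.Perm (Fin n)) : ℝ :=
  ∑ e ∈ edgeFS G, crossInd (gTwo n t₁ t₂ ⇑π) e

noncomputable def permExp (n : ℕ) (X : Equiv.Perm (Fin n) → ℝ) : ℝ :=
  (∑ π : Equiv.Perm (Fin n), X π) / (Nat.factorial n : ℝ)

noncomputable def permVar (n : ℕ) (X : Equiv.Perm (Fin n) → ℝ) : ℝ :=
  permExp n (fun π => (X π - permExp n X) ^ 2)

noncomputable def permCov (n : ℕ) (X Y : Equiv.Perm (Fin n) → ℝ) : ℝ :=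
  permExp n (fun π => (X π - permExp n X) * (Y π - permExp n Y))

noncomputable def p1 (n t : ℕ) : ℝ := 2 * t * ((n : ℝ) - t) / ((n : ℝ) * ((n : ℝ) - 1))

noncomputable def p2 (n t : ℕ) : ℝ :=
  4 * t * ((t : ℝ) - 1) * ((n : ℝ) - t) * ((n : ℝ) - t - 1) /
    ((n : ℝ) * ((n : ℝ) - 1) * ((n : ℝ) - 2) * ((n : ℝ) - 3))

noncomputable def numEdges {n : ℕ} (G : SimpleGraph (Fin n)) : ℝ := ((edgeFS G).card : ℝ)

noncomputable def degSq {n : ℕ} (G : SimpleGraph (Fin n)) : ℝ :=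
  ∑ i : Fin n, (deg G i : ℝ) ^ 2

noncomputable def Zone {n : ℕ} (G : SimpleGraph (Fin n)) (t : ℕ) (π : Equiv.Perm (Fin n)) : ℝ :=
  -(Rone G t π - permExp n (Rone G t)) / Real.sqrt (permVar n (Rone G t))

noncomputable def Ztwo {n : ℕ} (G : SimpleGraph (Fin n)) (t₁ t₂ : ℕ)
    (π : Equiv.Perm (Fin n)) : ℝ :=
  -(Rtwo G t₁ t₂ π - permExp n (Rtwo G t₁ t₂)) / Real.sqrt (permVar n (Rtwo G t₁ t₂))



variable {n : ℕ}

noncomputable def restr (S : Finset (Fin n)) (π : Equiv.Perm (Fin n)) : (↥S ↪ Fin n) :=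
  ⟨fun i => π i.1, fun _ _ h => Subtype.ext (π.injective h)⟩

lemma restr_apply (S : Finset (Fin n)) (π : Equiv.Perm (Fin n)) (i : ↥S) :
    restr S π i = π i.1 := rfl

lemma exists_extend (S : Finset (Fin n)) (f : ↥S ↪ Fin n) :
    ∃ σ : Equiv.Perm (Fin n), restr S σ = f := by
  classical
  have hinj : Function.Injective (fun i : (S : Set (Fin n)) => f ⟨i.1, i.2⟩) := by
    intro a b h
    have := f.injective h
    exact Subtype.ext (congrArg Subtype.val this)
  let e₀ : (S : Set (Fin n)) ≃ Set.range (fun i : (S : Set (Fin n)) => f ⟨i.1, i.2⟩) :=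
    Equiv.ofInjective _ hinj
  have hcard : Fintype.card (↥((S : Set (Fin n))ᶜ)) =
      Fintype.card (↥((Set.range (fun i : (S : Set (Fin n)) => f ⟨i.1, i.2⟩))ᶜ)) := by
    rw [Fintype.card_compl_set, Fintype.card_compl_set]
    congr 1
    exact Fintype.card_congr e₀
  let e₁ := Fintype.equivOfCardEq hcard
  obtain ⟨σ, hσ⟩ := ((Equiv.Set.compl e₀).symm e₁)
  refine ⟨σ, ?_⟩
  ext i
  have := hσ ⟨i.1, i.2⟩
  simp only [restr_apply, this]
  rfl

lemma card_fiber_eq (S : Finset (Fin n)) (f g : ↥S ↪ Fin n) :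
    (univ.filter fun π : Equiv.Perm (Fin n) => restr S π = f).card
      = (univ.filter fun π : Equiv.Perm (Fin n) => restr S π = g).card := by
  classical
  obtain ⟨σ, hσ⟩ := exists_extend S f
  obtain ⟨τ, hτ⟩ := exists_extend S g
  have key : ∀ (σ τ : Equiv.Perm (Fin n)) (f g : ↥S ↪ Fin n), restr S σ = f → restr S τ = g →
      ∀ π : Equiv.Perm (Fin n), restr S π = f → restr S (τ * σ⁻¹ * π) = g := by
    intro σ τ f g hσ hτ π hπ
    ext i
    have h1 : π i.1 = f i := by rw [← hπ]; rfl
    have h2 : σ i.1 = f i := by rw [← hσ]; rfl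
    have h3 : τ i.1 = g i := by rw [← hτ]; rfl
    simp only [restr_apply, Equiv.Perm.mul_apply, h1, ← h2, Equiv.Perm.inv_def, Equiv.symm_apply_apply, h3]
  refine Finset.card_bij' (fun π _ => τ * σ⁻¹ * π) (fun π _ => σ * τ⁻¹ * π) ?_ ?_ ?_ ?_
  · intro π hπ
    simp only [mem_filter, mem_univ, true_and] at hπ ⊢
    exact key σ τ f g hσ hτ π hπ
  · intro π hπ
    simp only [mem_filter, mem_univ, true_and] at hπ ⊢
    exact key τ σ g f hτ hσ π hπ
  · intro π _; group
  · intro π _; group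


noncomputable def fibC (S : Finset (Fin n)) : ℕ :=
  (univ.filter fun π : Equiv.Perm (Fin n) => restr S π = restr S 1).card

lemma factorial_eq_fibC (S : Finset (Fin n)) :
    n.factorial = n.descFactorial S.card * fibC S := by
  classical
  have h := Finset.card_eq_sum_card_fiberwise
    (f := restr S) (s := (univ : Finset (Equiv.Perm (Fin n)))) (t := univ)
    (fun x _ => mem_univ _)
  have h2 : ∀ f ∈ (univ : Finset (↥S ↪ Fin n)),
      (univ.filter fun π : Equiv.Perm (Fin n) => restr S π = f).card = fibC S :=
    fun f _ => card_fiber_eq S f (restr S 1)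
  rw [Finset.sum_congr rfl h2, Finset.sum_const, smul_eq_mul, card_univ, card_univ] at h
  rw [Fintype.card_embedding_eq, Fintype.card_coe, Fintype.card_fin] at h
  rw [← h, Fintype.card_perm, Fintype.card_fin]

lemma count_maps_into (S : Finset (Fin n)) (t : ℕ) (htn : t ≤ n) :
    ((univ.filter fun π : Equiv.Perm (Fin n) => ∀ i ∈ S, ((π i : Fin n) : ℕ) < t)).card
      = t.descFactorial S.card * fibC S := by
  classical
  have h := Finset.card_eq_sum_card_fiberwise
    (f := restr S)
    (s := (univ.filter fun π : Equiv.Perm (Fin n) => ∀ i ∈ S, ((π i : Fin n) : ℕ) < t))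
    (t := univ.filter fun f : ↥S ↪ Fin n => ∀ i : ↥S, ((f i : Fin n) : ℕ) < t)
    (by
      intro π hπ
      simp only [Finset.coe_filter, mem_filter, mem_univ, true_and, Set.mem_setOf_eq] at hπ ⊢
      intro i; exact hπ i.1 i.2)
  rw [h]
  have h2 : ∀ f ∈ (univ.filter fun f : ↥S ↪ Fin n => ∀ i : ↥S, ((f i : Fin n) : ℕ) < t),
      (((univ.filter fun π : Equiv.Perm (Fin n) => ∀ i ∈ S, ((π i : Fin n) : ℕ) < t)).filter
        fun π => restr S π = f).card = fibC S := by
    intro f hf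
    simp only [mem_filter, mem_univ, true_and] at hf
    rw [Finset.filter_filter]
    have : ((univ : Finset (Equiv.Perm (Fin n))).filter
        fun π => (∀ i ∈ S, ((π i : Fin n) : ℕ) < t) ∧ restr S π = f)
        = univ.filter fun π => restr S π = f := by
      apply Finset.filter_congr
      intro π _
      constructor
      · exact fun h => h.2
      · intro h
        refine ⟨?_, h⟩
        intro i hi
        have : π i = f ⟨i, hi⟩ := by rw [← h]; rfl
        rw [this]; exact hf ⟨i, hi⟩
    rw [this]
    exact card_fiber_eq S f (restr S 1)
  rw [Finset.sum_congr rfl h2, Finset.sum_const, smul_eq_mul]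
  congr 1
  -- number of "good" embeddings equals t.descFactorial S.card
  have e : {f : ↥S ↪ Fin n // ∀ i : ↥S, ((f i : Fin n) : ℕ) < t}
      ≃ (↥S ↪ {v : Fin n // (v : ℕ) < t}) := by
    refine ⟨fun f => ⟨fun i => ⟨f.1 i, f.2 i⟩, fun a b h => f.1.injective (by
      exact congrArg Subtype.val h)⟩,
      fun g => ⟨⟨fun i => (g i).1, fun a b h => g.injective (Subtype.ext h)⟩,
        fun i => (g i).2⟩, ?_, ?_⟩
    · intro f; ext i; rfl
    · intro g; ext i; rfl
  have hcard : Fintype.card {v : Fin n // (v : ℕ) < t} = t := by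
    have e2 : {v : Fin n // (v : ℕ) < t} ≃ Fin t :=
      ⟨fun v => ⟨v.1.1, v.2⟩, fun a => ⟨⟨a.1, lt_of_lt_of_le a.2 htn⟩, a.2⟩,
        fun v => by ext; rfl, fun a => by ext; rfl⟩
    rw [Fintype.card_congr e2, Fintype.card_fin]
  calc ((univ.filter fun f : ↥S ↪ Fin n => ∀ i : ↥S, ((f i : Fin n) : ℕ) < t)).card
      = Fintype.card {f : ↥S ↪ Fin n // ∀ i : ↥S, ((f i : Fin n) : ℕ) < t} :=
        (Fintype.card_subtype _).symm
    _ = Fintype.card (↥S ↪ {v : Fin n // (v : ℕ) < t}) := Fintype.card_congr e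
    _ = t.descFactorial S.card := by
        rw [Fintype.card_embedding_eq, Fintype.card_coe, hcard]


/-- the indicator `1{π(i) ≤ t}` (0-indexed: `π(i).val < t`) -/
noncomputable def hh (t : ℕ) (v : Fin n) : ℝ := if (v : ℕ) < t then 1 else 0

noncomputable def q (n t m : ℕ) : ℝ := (t.descFactorial m : ℝ) / (n.descFactorial m : ℝ)

lemma prod_hh (t : ℕ) (S : Finset (Fin n)) (π : Equiv.Perm (Fin n)) :
    (∏ i ∈ S, hh t (π i)) = if (∀ i ∈ S, ((π i : Fin n) : ℕ) < t) then 1 else 0 := by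
  classical
  split_ifs with h
  · exact Finset.prod_eq_one fun i hi => by simp [hh, h i hi]
  · push_neg at h
    obtain ⟨i, hi, hlt⟩ := h
    exact Finset.prod_eq_zero hi (by simp [hh, hlt])

lemma moment (t : ℕ) (htn : t ≤ n) (S : Finset (Fin n)) :
    permExp n (fun π => ∏ i ∈ S, hh t (π i)) = q n t S.card := by
  classical
  have key : (∑ π : Equiv.Perm (Fin n), ∏ i ∈ S, hh t (π i))
      = ((t.descFactorial S.card * fibC S : ℕ) : ℝ) := by
    rw [← count_maps_into S t htn]
    rw [Finset.sum_congr rfl fun π _ => prod_hh t S π]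
    rw [Finset.sum_boole]
  have hfe := factorial_eq_fibC (n := n) S
  have hfz := Nat.factorial_ne_zero n
  have hfib : (fibC S : ℝ) ≠ 0 := by
    have hne : fibC S ≠ 0 := by intro h0; rw [h0, Nat.mul_zero] at hfe; exact hfz hfe
    exact_mod_cast hne
  have hd : (n.descFactorial S.card : ℝ) ≠ 0 := by
    have : n.descFactorial S.card ≠ 0 := by
      intro h0; rw [h0, Nat.zero_mul] at hfe; exact hfz hfe
    exact_mod_cast this
  rw [permExp, key, q]
  have hfac : ((n.factorial : ℕ) : ℝ) = (n.descFactorial S.card : ℝ) * (fibC S : ℝ) := by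
    rw [← Nat.cast_mul, ← factorial_eq_fibC]
  push_cast
  rw [hfac]
  field_simp


lemma permExp_sum {ι : Type*} (s : Finset ι) (F : ι → Equiv.Perm (Fin n) → ℝ) :
    permExp n (fun π => ∑ x ∈ s, F x π) = ∑ x ∈ s, permExp n (F x) := by
  simp only [permExp, ← Finset.sum_div]
  rw [Finset.sum_comm]

lemma permExp_const_mul (c : ℝ) (F : Equiv.Perm (Fin n) → ℝ) :
    permExp n (fun π => c * F π) = c * permExp n F := by
  simp only [permExp, ← Finset.mul_sum, mul_div_assoc]

lemma permExp_one : permExp n (fun _ => (1:ℝ)) = 1 := by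
  simp only [permExp, Finset.sum_const, card_univ, nsmul_eq_mul, mul_one]
  rw [Fintype.card_perm, Fintype.card_fin]
  exact div_self (by exact_mod_cast (Nat.factorial_ne_zero n))

lemma permVar_eq (X : Equiv.Perm (Fin n) → ℝ) :
    permVar n X = permExp n (fun π => X π * X π) - (permExp n X) ^ 2 := by
  have h : (fun π => (X π - permExp n X) ^ 2)
      = fun π : Equiv.Perm (Fin n) => (1:ℝ) * (X π * X π)
        + (-2 * permExp n X) * X π + (permExp n X ^ 2) * (1:ℝ) := by
    funext π; ring
  rw [permVar, h]
  have comb : permExp n (fun π : Equiv.Perm (Fin n) => (1:ℝ) * (X π * X π)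
      + (-2 * permExp n X) * X π + (permExp n X ^ 2) * (1:ℝ))
      = 1 * permExp n (fun π => X π * X π) + (-2 * permExp n X) * permExp n X
        + (permExp n X ^ 2) * permExp n (fun _ => (1:ℝ)) := by
    simp only [permExp, Finset.sum_add_distrib, ← Finset.mul_sum]
    ring
  rw [comb, permExp_one]
  ring

lemma descFactorial_cast (a k : ℕ) :
    (a.descFactorial k : ℝ) = ∏ i ∈ Finset.range k, ((a:ℝ) - i) := by
  induction k with
  | zero => simp
  | succ k ih =>
    rw [Nat.descFactorial_succ, Finset.prod_range_succ, Nat.cast_mul, ih]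
    by_cases h : k ≤ a
    · rw [Nat.cast_sub h]; ring
    · push_neg at h
      have h1 : ∏ i ∈ Finset.range k, ((a:ℝ) - i) = 0 :=
        Finset.prod_eq_zero (Finset.mem_range.2 h) (by simp)
      have h2 : a.descFactorial k = 0 := Nat.descFactorial_eq_zero_iff_lt.2 h
      rw [h1]
      simp


variable (t : ℕ)

lemma Em1 (htn : t ≤ n) (a : Fin n) : permExp n (fun π => hh t (π a)) = q n t 1 := by
  have h := moment t htn ({a} : Finset (Fin n))
  simpa using h

lemma Em2 (htn : t ≤ n) {a b : Fin n} (hab : a ≠ b) :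
    permExp n (fun π => hh t (π a) * hh t (π b)) = q n t 2 := by
  have h := moment t htn ({a, b} : Finset (Fin n))
  rw [Finset.card_pair hab] at h
  rw [← h]
  congr 1
  funext π
  rw [Finset.prod_pair hab]

lemma Em3 (htn : t ≤ n) {a b c : Fin n} (hab : a ≠ b) (hac : a ≠ c) (hbc : b ≠ c) :
    permExp n (fun π => hh t (π a) * hh t (π b) * hh t (π c)) = q n t 3 := by
  have h := moment t htn ({a, b, c} : Finset (Fin n))
  have hcard : ({a, b, c} : Finset (Fin n)).card = 3 := by
    rw [Finset.card_insert_of_notMem (by simp [hab, hac]), Finset.card_pair hbc]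
  rw [hcard] at h
  rw [← h]
  congr 1
  funext π
  rw [Finset.prod_insert (by simp [hab, hac]), Finset.prod_pair hbc]
  ring

lemma Em4 (htn : t ≤ n) {a b c d : Fin n} (hab : a ≠ b) (hac : a ≠ c) (had : a ≠ d)
    (hbc : b ≠ c) (hbd : b ≠ d) (hcd : c ≠ d) :
    permExp n (fun π => hh t (π a) * hh t (π b) * hh t (π c) * hh t (π d)) = q n t 4 := by
  have h := moment t htn ({a, b, c, d} : Finset (Fin n))
  have hcard : ({a, b, c, d} : Finset (Fin n)).card = 4 := by
    rw [Finset.card_insert_of_notMem (by simp [hab, hac, had]),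
      Finset.card_insert_of_notMem (by simp [hbc, hbd]), Finset.card_pair hcd]
  rw [hcard] at h
  rw [← h]
  congr 1
  funext π
  rw [Finset.prod_insert (by simp [hab, hac, had]),
    Finset.prod_insert (by simp [hbc, hbd]), Finset.prod_pair hcd]
  ring

lemma comb3 (f1 f2 f3 : Equiv.Perm (Fin n) → ℝ) (a1 a2 a3 : ℝ) :
    permExp n (fun π => a1 * f1 π + a2 * f2 π + a3 * f3 π)
      = a1 * permExp n f1 + a2 * permExp n f2 + a3 * permExp n f3 := by
  simp only [permExp, Finset.sum_add_distrib, ← Finset.mul_sum]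
  ring

lemma comb4 (f1 f2 f3 f4 : Equiv.Perm (Fin n) → ℝ) (a1 a2 a3 a4 : ℝ) :
    permExp n (fun π => a1 * f1 π + a2 * f2 π + a3 * f3 π + a4 * f4 π)
      = a1 * permExp n f1 + a2 * permExp n f2 + a3 * permExp n f3 + a4 * permExp n f4 := by
  simp only [permExp, Finset.sum_add_distrib, ← Finset.mul_sum]
  ring

lemma comb9 (f1 f2 f3 f4 f5 f6 f7 f8 f9 : Equiv.Perm (Fin n) → ℝ)
    (a1 a2 a3 a4 a5 a6 a7 a8 a9 : ℝ) :
    permExp n (fun π => a1 * f1 π + a2 * f2 π + a3 * f3 π + a4 * f4 π + a5 * f5 π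
        + a6 * f6 π + a7 * f7 π + a8 * f8 π + a9 * f9 π)
      = a1 * permExp n f1 + a2 * permExp n f2 + a3 * permExp n f3 + a4 * permExp n f4
        + a5 * permExp n f5 + a6 * permExp n f6 + a7 * permExp n f7 + a8 * permExp n f8
        + a9 * permExp n f9 := by
  simp only [permExp, Finset.sum_add_distrib, ← Finset.mul_sum]
  ring


/-- the cross indicator as a polynomial in the `hh`'s -/
noncomputable def CC (t : ℕ) (i j : Fin n) (π : Equiv.Perm (Fin n)) : ℝ :=
  hh t (π i) + hh t (π j) - 2 * (hh t (π i) * hh t (π j))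

lemma CC_symm (i j : Fin n) : CC t i j = CC t j i := by
  funext π; simp only [CC]; ring

lemma EC1 (htn : t ≤ n) {i j : Fin n} (hij : i ≠ j) :
    permExp n (CC t i j) = 2 * q n t 1 - 2 * q n t 2 := by
  have : CC t i j = fun π => (1:ℝ) * (hh t (π i)) + 1 * (hh t (π j))
      + (-2) * (hh t (π i) * hh t (π j)) := by
    funext π; simp only [CC]; ring
  rw [this, comb3, Em1 t htn, Em1 t htn, Em2 t htn hij]
  ring

lemma ECsq (htn : t ≤ n) {i j : Fin n} (hij : i ≠ j) :
    permExp n (fun π => CC t i j π * CC t i j π) = 2 * q n t 1 - 2 * q n t 2 := by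
  have : (fun π => CC t i j π * CC t i j π) = CC t i j := by
    funext π; simp only [CC, hh]; split_ifs <;> norm_num
  rw [this, EC1 t htn hij]

lemma EC3 (htn : t ≤ n) {a b c : Fin n} (hab : a ≠ b) (hac : a ≠ c) (hbc : b ≠ c) :
    permExp n (fun π => CC t a b π * CC t a c π) = q n t 1 - q n t 2 := by
  have : (fun π => CC t a b π * CC t a c π)
      = fun π => (1:ℝ) * (hh t (π a)) + (-1) * (hh t (π a) * hh t (π b))
        + (-1) * (hh t (π a) * hh t (π c)) + 1 * (hh t (π b) * hh t (π c)) := by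
    funext π; simp only [CC, hh]; split_ifs <;> norm_num
  rw [this, comb4, Em1 t htn, Em2 t htn hab, Em2 t htn hac, Em2 t htn hbc]
  ring

lemma EC4 (htn : t ≤ n) {i j k l : Fin n} (hij : i ≠ j) (hik : i ≠ k) (hil : i ≠ l)
    (hjk : j ≠ k) (hjl : j ≠ l) (hkl : k ≠ l) :
    permExp n (fun π => CC t i j π * CC t k l π)
      = 4 * q n t 2 - 8 * q n t 3 + 4 * q n t 4 := by
  have : (fun π => CC t i j π * CC t k l π)
      = fun π => (1:ℝ) * (hh t (π i) * hh t (π k)) + 1 * (hh t (π i) * hh t (π l))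
        + 1 * (hh t (π j) * hh t (π k)) + 1 * (hh t (π j) * hh t (π l))
        + (-2) * (hh t (π i) * hh t (π k) * hh t (π l))
        + (-2) * (hh t (π j) * hh t (π k) * hh t (π l))
        + (-2) * (hh t (π i) * hh t (π j) * hh t (π k))
        + (-2) * (hh t (π i) * hh t (π j) * hh t (π l))
        + 4 * (hh t (π i) * hh t (π j) * hh t (π k) * hh t (π l)) := by
    funext π; simp only [CC]; ring
  rw [this, comb9, Em2 t htn hik, Em2 t htn hil, Em2 t htn hjk, Em2 t htn hjl,
    Em3 t htn hik hil hkl, Em3 t htn hjk hjl hkl, Em3 t htn hij hik hjk,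
    Em3 t htn hij hil hjl, Em4 t htn hij hik hil hjk hjl hkl]
  ring

/-- real-valued equality indicator -/
noncomputable def dd (a b : Fin n) : ℝ := if a = b then 1 else 0

lemma ECpattern (htn : t ≤ n) {i j k l : Fin n} (hij : i ≠ j) (hkl : k ≠ l) :
    permExp n (fun π => CC t i j π * CC t k l π)
      = (4 * q n t 2 - 8 * q n t 3 + 4 * q n t 4)
        + ((q n t 1 - q n t 2) - (4 * q n t 2 - 8 * q n t 3 + 4 * q n t 4))
            * (dd i k + dd i l + dd j k + dd j l)
        + ((2 * q n t 1 - 2 * q n t 2) - 2 * (q n t 1 - q n t 2)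
            + (4 * q n t 2 - 8 * q n t 3 + 4 * q n t 4))
            * (dd i k * dd j l + dd i l * dd j k) := by
  by_cases hik : i = k <;> by_cases hil : i = l <;> by_cases hjk : j = k <;> by_cases hjl : j = l
  -- 1 TTTT
  · exact absurd (hik ▸ hil : k = l) hkl
  -- 2 TTTF
  · exact absurd (hik ▸ hil : k = l) hkl
  -- 3 TTFT
  · exact absurd (hik ▸ hil : k = l) hkl
  -- 4 TTFF
  · exact absurd (hik ▸ hil : k = l) hkl
  -- 5 TFTT
  · exact absurd (hik ▸ hjk ▸ rfl : i = j) hij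
  -- 6 TFTF
  · exact absurd (hik ▸ hjk ▸ rfl : i = j) hij
  -- 7 TFFT (i=k, j=l)
  · subst hik; subst hjl
    simp only [dd, if_pos rfl, if_true, if_neg hil, if_neg hjk, if_neg hkl]
    rw [ECsq t htn hij]
    ring
  -- 8 TFFF (i=k)
  · subst hik
    simp only [dd, if_pos rfl, if_true, if_neg hil, if_neg hjk, if_neg hjl, if_neg hkl]
    rw [EC3 t htn hij hil hjl]
    ring
  -- 9 FTTT
  · exact absurd (hjk ▸ hjl : k = l) hkl
  -- 10 FTTF (i=l, j=k)
  · subst hil; subst hjk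
    simp only [dd, if_pos rfl, if_true, if_neg hik, if_neg hjl, if_neg hkl]
    rw [← CC_symm t i j]
    rw [ECsq t htn hij]
    ring
  -- 11 FTFT
  · exact absurd (hil ▸ hjl ▸ rfl : i = j) hij
  -- 12 FTFF (i=l)
  · subst hil
    simp only [dd, if_pos rfl, if_true, if_neg hik, if_neg hjk, if_neg hjl, if_neg hkl]
    rw [CC_symm t k i]
    rw [EC3 t htn hij hik hjk]
    ring
  -- 13 FFTT
  · exact absurd (hjk ▸ hjl : k = l) hkl
  -- 14 FFTF (j=k)
  · subst hjk
    simp only [dd, if_pos rfl, if_true, if_neg hik, if_neg hil, if_neg hjl, if_neg hkl]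
    rw [CC_symm t i j]
    rw [EC3 t htn (Ne.symm hij) hjl hil]
    ring
  -- 15 FFFT (j=l)
  · subst hjl
    simp only [dd, if_pos rfl, if_true, if_neg hik, if_neg hil, if_neg hjk, if_neg hkl]
    rw [CC_symm t i j, CC_symm t k j]
    rw [EC3 t htn (Ne.symm hij) hjk hik]
    ring
  -- 16 FFFF
  · simp only [dd, if_neg hik, if_neg hil, if_neg hjk, if_neg hjl]
    rw [EC4 t htn hij hik hil hjk hjl hkl]
    ring


open scoped Classical

noncomputable def AA (G : SimpleGraph (Fin n)) (i j : Fin n) : ℝ :=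
  if G.Adj i j then 1 else 0

lemma edgeFS_eq (G : SimpleGraph (Fin n)) : edgeFS G = G.edgeFinset := by
  unfold edgeFS
  ext e
  simp only [SimpleGraph.mem_edgeFinset]

lemma deg_eq (G : SimpleGraph (Fin n)) (i : Fin n) : deg G i = G.degree i := by
  unfold deg
  congr!

lemma AA_symm (G : SimpleGraph (Fin n)) (i j : Fin n) : AA G i j = AA G j i := by
  simp only [AA]
  by_cases h : G.Adj i j
  · rw [if_pos h, if_pos h.symm]
  · rw [if_neg h, if_neg fun h' => h h'.symm]

lemma crossInd_eq_CC (t : ℕ) (π : Equiv.Perm (Fin n)) (i j : Fin n) :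
    crossInd (gOne n t ⇑π) s(i, j) = CC t i j π := by
  show (if gOne n t ⇑π i ≠ gOne n t ⇑π j then (1:ℝ) else 0) = _
  simp only [gOne, CC, hh]
  by_cases hu : ((π i : Fin n) : ℕ) < t <;> by_cases hv : ((π j : Fin n) : ℕ) < t
  · rw [if_pos hu, if_pos hv]; split_ifs with h
    · exact absurd h (by simp; omega)
    · exact (if_neg h).trans (by ring)
  · rw [if_pos hu, if_neg hv]; split_ifs with h
    · exact (if_pos h).trans (by ring)
    · exact absurd h (by simp; omega)
  · rw [if_neg hu, if_pos hv]; split_ifs with h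
    · exact (if_pos h).trans (by ring)
    · exact absurd h (by simp; omega)
  · rw [if_neg hu, if_neg hv]; split_ifs with h
    · exact absurd h (by simp; omega)
    · exact (if_neg h).trans (by ring)

/-- 2-to-1 sum lemma -/
lemma sum_edge (G : SimpleGraph (Fin n)) (f : Sym2 (Fin n) → ℝ) :
    ∑ i : Fin n, ∑ j : Fin n, (if G.Adj i j then f s(i, j) else 0)
      = 2 * ∑ e ∈ edgeFS G, f e := by
  classical
  rw [edgeFS_eq]
  rw [← Finset.sum_product']
  rw [← Finset.sum_filter]
  have hmaps : ∀ p ∈ (univ ×ˢ univ : Finset (Fin n × Fin n)).filter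
      (fun p => G.Adj p.1 p.2), s(p.1, p.2) ∈ G.edgeFinset := by
    intro p hp
    simp only [mem_filter] at hp
    rw [SimpleGraph.mem_edgeFinset]
    exact hp.2
  have h := Finset.sum_fiberwise_of_maps_to' hmaps f
  rw [← h]
  rw [Finset.mul_sum]
  refine Finset.sum_congr rfl ?_
  intro e he
  rw [Finset.sum_const, nsmul_eq_mul]
  congr 1
  -- fiber card = 2
  induction e with
  | _ x y =>
    rw [SimpleGraph.mem_edgeFinset, SimpleGraph.mem_edgeSet] at he
    have hxy : x ≠ y := G.ne_of_adj he
    have : ((univ ×ˢ univ : Finset (Fin n × Fin n)).filter (fun p => G.Adj p.1 p.2)).filter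
        (fun p => s(p.1, p.2) = s(x, y)) = {(x, y), (y, x)} := by
      ext p
      simp only [mem_filter, mem_univ, mem_product, true_and, mem_insert, mem_singleton]
      constructor
      · rintro ⟨-, hp⟩
        rcases Sym2.eq_iff.1 hp with ⟨h1, h2⟩ | ⟨h1, h2⟩
        · left; exact Prod.ext h1 h2
        · right; exact Prod.ext h1 h2
      · rintro (rfl | rfl)
        · exact ⟨he, rfl⟩
        · exact ⟨he.symm, Sym2.eq_swap⟩
    rw [this, Finset.card_insert_of_notMem (by simp [hxy]), Finset.card_singleton]
    norm_num


lemma sum_AA_row (G : SimpleGraph (Fin n)) (i : Fin n) :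
    ∑ j : Fin n, AA G i j = (deg G i : ℝ) := by
  classical
  rw [deg_eq]
  simp only [AA, Finset.sum_boole]
  rw [← SimpleGraph.neighborFinset_eq_filter, SimpleGraph.card_neighborFinset_eq_degree]

lemma sum_AA (G : SimpleGraph (Fin n)) :
    ∑ i : Fin n, ∑ j : Fin n, AA G i j = 2 * numEdges G := by
  classical
  calc ∑ i : Fin n, ∑ j : Fin n, AA G i j = ∑ i : Fin n, (deg G i : ℝ) :=
        Finset.sum_congr rfl fun i _ => sum_AA_row G i
    _ = ((∑ i : Fin n, G.degree i : ℕ) : ℝ) := by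
        rw [Nat.cast_sum]
        exact Finset.sum_congr rfl fun i _ => by rw [deg_eq]
    _ = 2 * numEdges G := by
        rw [SimpleGraph.sum_degrees_eq_twice_card_edges, numEdges, edgeFS_eq]
        push_cast
        ring


lemma Rone_eq (G : SimpleGraph (Fin n)) (t : ℕ) (π : Equiv.Perm (Fin n)) :
    Rone G t π = (1/2) * ∑ p : Fin n × Fin n, AA G p.1 p.2 * CC t p.1 p.2 π := by
  have h1 : ∑ p : Fin n × Fin n, AA G p.1 p.2 * CC t p.1 p.2 π
      = ∑ i : Fin n, ∑ j : Fin n,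
          (if G.Adj i j then crossInd (gOne n t ⇑π) s(i, j) else 0) := by
    rw [Fintype.sum_prod_type]
    refine Finset.sum_congr rfl fun i _ => Finset.sum_congr rfl fun j _ => ?_
    rw [crossInd_eq_CC, AA]
    by_cases h : G.Adj i j
    · rw [if_pos h, if_pos h, one_mul]
    · rw [if_neg h, if_neg h, zero_mul]
  rw [h1, sum_edge]
  show Rone G t π = (1/2) * (2 * ∑ e ∈ edgeFS G, crossInd (gOne n t ⇑π) e)
  rw [Rone, RoneF]
  ring

lemma ER (G : SimpleGraph (Fin n)) (t : ℕ) (htn : t ≤ n) :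
    permExp n (Rone G t) = (2 * q n t 1 - 2 * q n t 2) * numEdges G := by
  have h0 : Rone G t = fun π => (1/2) * ∑ p : Fin n × Fin n, AA G p.1 p.2 * CC t p.1 p.2 π :=
    funext fun π => Rone_eq G t π
  rw [h0, permExp_const_mul, permExp_sum]
  have h1 : ∀ p : Fin n × Fin n,
      permExp n (fun π => AA G p.1 p.2 * CC t p.1 p.2 π)
        = AA G p.1 p.2 * (2 * q n t 1 - 2 * q n t 2) := by
    intro p
    rw [permExp_const_mul]
    by_cases h : G.Adj p.1 p.2
    · rw [EC1 t htn (G.ne_of_adj h)]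
    · rw [AA, if_neg h, zero_mul, zero_mul]
  rw [Finset.sum_congr rfl fun p _ => h1 p]
  rw [← Finset.sum_mul]
  have h2 : ∑ p : Fin n × Fin n, AA G p.1 p.2 = 2 * numEdges G := by
    rw [Fintype.sum_prod_type]
    exact sum_AA G
  rw [h2]
  ring


-- collapse lemmas
lemma L0 (G : SimpleGraph (Fin n)) :
    ∑ p : Fin n × Fin n, ∑ r : Fin n × Fin n, AA G p.1 p.2 * AA G r.1 r.2
      = (2 * numEdges G) ^ 2 := by
  have : ∑ p : Fin n × Fin n, ∑ r : Fin n × Fin n, AA G p.1 p.2 * AA G r.1 r.2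
      = (∑ p : Fin n × Fin n, AA G p.1 p.2) * (∑ r : Fin n × Fin n, AA G r.1 r.2) := by
    rw [Finset.sum_mul_sum]
  rw [this]
  have h2 : ∑ p : Fin n × Fin n, AA G p.1 p.2 = 2 * numEdges G := by
    rw [Fintype.sum_prod_type]; exact sum_AA G
  rw [h2]; ring

lemma degSq_eq (G : SimpleGraph (Fin n)) :
    ∑ i : Fin n, (∑ j : Fin n, AA G i j) * (∑ j : Fin n, AA G i j) = degSq G := by
  rw [degSq]
  refine Finset.sum_congr rfl fun i _ => ?_
  rw [sum_AA_row, pow_two]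

lemma L1a (G : SimpleGraph (Fin n)) :
    ∑ p : Fin n × Fin n, ∑ r : Fin n × Fin n,
      AA G p.1 p.2 * AA G r.1 r.2 * dd p.1 r.1 = degSq G := by
  rw [← degSq_eq G]
  simp only [Fintype.sum_prod_type]
  rw [Finset.sum_congr rfl fun i (_ : i ∈ univ) => Finset.sum_mul_sum
    (univ : Finset (Fin n)) (univ : Finset (Fin n)) (fun j => AA G i j) (fun j => AA G i j)]
  refine Finset.sum_congr rfl fun i _ => Finset.sum_congr rfl fun j _ => ?_
  -- goal: ∑ k, ∑ l, AA i j * AA k l * dd i k = ∑ l, AA i j * AA i l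
  simp only [dd, mul_ite, mul_one, mul_zero]
  rw [Finset.sum_comm]
  simp only [Finset.sum_ite_irrel, Finset.sum_const_zero, Finset.sum_ite_eq, mem_univ, if_true]


lemma swap_sum (g : Fin n × Fin n → ℝ) :
    ∑ r : Fin n × Fin n, g (r.2, r.1) = ∑ r : Fin n × Fin n, g r :=
  Fintype.sum_equiv (Equiv.prodComm (Fin n) (Fin n)) _ _ (fun r => rfl)

lemma L1b (G : SimpleGraph (Fin n)) :
    ∑ p : Fin n × Fin n, ∑ r : Fin n × Fin n,
      AA G p.1 p.2 * AA G r.1 r.2 * dd p.1 r.2 = degSq G := by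
  rw [← L1a G]
  refine Finset.sum_congr rfl fun p _ => ?_
  rw [← swap_sum (fun r => AA G p.1 p.2 * AA G r.1 r.2 * dd p.1 r.2)]
  refine Finset.sum_congr rfl fun r _ => ?_
  show AA G p.1 p.2 * AA G r.2 r.1 * dd p.1 r.1 = _
  rw [AA_symm G r.2 r.1]

lemma L1c (G : SimpleGraph (Fin n)) :
    ∑ p : Fin n × Fin n, ∑ r : Fin n × Fin n,
      AA G p.1 p.2 * AA G r.1 r.2 * dd p.2 r.1 = degSq G := by
  rw [← L1a G]
  rw [← swap_sum (fun p => ∑ r : Fin n × Fin n, AA G p.1 p.2 * AA G r.1 r.2 * dd p.2 r.1)]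
  refine Finset.sum_congr rfl fun p _ => Finset.sum_congr rfl fun r _ => ?_
  show AA G p.2 p.1 * AA G r.1 r.2 * dd p.1 r.1 = _
  rw [AA_symm G p.2 p.1]

lemma L1d (G : SimpleGraph (Fin n)) :
    ∑ p : Fin n × Fin n, ∑ r : Fin n × Fin n,
      AA G p.1 p.2 * AA G r.1 r.2 * dd p.2 r.2 = degSq G := by
  rw [← L1c G]
  refine Finset.sum_congr rfl fun p _ => ?_
  rw [← swap_sum (fun r => AA G p.1 p.2 * AA G r.1 r.2 * dd p.2 r.2)]
  refine Finset.sum_congr rfl fun r _ => ?_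
  show AA G p.1 p.2 * AA G r.2 r.1 * dd p.2 r.1 = _
  rw [AA_symm G r.2 r.1]

lemma AA_idem (G : SimpleGraph (Fin n)) (i j : Fin n) : AA G i j * AA G i j = AA G i j := by
  rw [AA]
  by_cases h : G.Adj i j
  · rw [if_pos h, one_mul]
  · rw [if_neg h, zero_mul]

lemma L2a (G : SimpleGraph (Fin n)) :
    ∑ p : Fin n × Fin n, ∑ r : Fin n × Fin n,
      AA G p.1 p.2 * AA G r.1 r.2 * (dd p.1 r.1 * dd p.2 r.2) = 2 * numEdges G := by
  simp only [Fintype.sum_prod_type]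
  simp only [dd, mul_ite, mul_one, mul_zero, ite_mul, zero_mul,
    Finset.sum_ite_irrel, Finset.sum_const_zero, Finset.sum_ite_eq, mem_univ, if_true]
  rw [Finset.sum_congr rfl fun i (_ : i ∈ univ) =>
    Finset.sum_congr rfl fun j (_ : j ∈ univ) => AA_idem G i j]
  rw [← sum_AA G]

lemma L2b (G : SimpleGraph (Fin n)) :
    ∑ p : Fin n × Fin n, ∑ r : Fin n × Fin n,
      AA G p.1 p.2 * AA G r.1 r.2 * (dd p.1 r.2 * dd p.2 r.1) = 2 * numEdges G := by
  have h : ∀ p : Fin n × Fin n,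
      (∑ r : Fin n × Fin n, AA G p.1 p.2 * AA G r.1 r.2 * (dd p.1 r.2 * dd p.2 r.1))
      = ∑ r : Fin n × Fin n, AA G p.1 p.2 * AA G r.2 r.1 * (dd p.1 r.1 * dd p.2 r.2) := by
    intro p
    rw [← swap_sum (fun r => AA G p.1 p.2 * AA G r.1 r.2 * (dd p.1 r.2 * dd p.2 r.1))]
  rw [Finset.sum_congr rfl fun p _ => h p]
  rw [← L2a G]
  refine Finset.sum_congr rfl fun p _ => Finset.sum_congr rfl fun r _ => ?_
  rw [AA_symm G r.2 r.1]


lemma ER2 (G : SimpleGraph (Fin n)) (t : ℕ) (htn : t ≤ n) :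
    permExp n (fun π => Rone G t π * Rone G t π)
      = (4 * q n t 2 - 8 * q n t 3 + 4 * q n t 4) * (numEdges G) ^ 2
        + ((q n t 1 - q n t 2) - (4 * q n t 2 - 8 * q n t 3 + 4 * q n t 4)) * degSq G
        + ((2 * q n t 1 - 2 * q n t 2) - 2 * (q n t 1 - q n t 2)
            + (4 * q n t 2 - 8 * q n t 3 + 4 * q n t 4)) * numEdges G := by
  have hpt : (fun π => Rone G t π * Rone G t π)
      = fun π => (1/4) * ∑ p : Fin n × Fin n, ∑ r : Fin n × Fin n,
          (AA G p.1 p.2 * AA G r.1 r.2) * (CC t p.1 p.2 π * CC t r.1 r.2 π) := by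
    funext π
    rw [Rone_eq G t π]
    have hSS : (∑ p : Fin n × Fin n, AA G p.1 p.2 * CC t p.1 p.2 π)
        * (∑ r : Fin n × Fin n, AA G r.1 r.2 * CC t r.1 r.2 π)
        = ∑ p : Fin n × Fin n, ∑ r : Fin n × Fin n,
            (AA G p.1 p.2 * AA G r.1 r.2) * (CC t p.1 p.2 π * CC t r.1 r.2 π) := by
      rw [Finset.sum_mul_sum (univ : Finset (Fin n × Fin n)) (univ : Finset (Fin n × Fin n))
        (fun p => AA G p.1 p.2 * CC t p.1 p.2 π) (fun r => AA G r.1 r.2 * CC t r.1 r.2 π)]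
      exact Finset.sum_congr rfl fun p _ => Finset.sum_congr rfl fun r _ => by ring
    rw [← hSS]
    ring
  rw [hpt, permExp_const_mul, permExp_sum]
  have h1 : ∀ p : Fin n × Fin n,
      permExp n (fun π => ∑ r : Fin n × Fin n,
        (AA G p.1 p.2 * AA G r.1 r.2) * (CC t p.1 p.2 π * CC t r.1 r.2 π))
      = ∑ r : Fin n × Fin n, (AA G p.1 p.2 * AA G r.1 r.2)
          * permExp n (fun π => CC t p.1 p.2 π * CC t r.1 r.2 π) := by
    intro p
    rw [permExp_sum]
    exact Finset.sum_congr rfl fun r _ => permExp_const_mul _ _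
  rw [Finset.sum_congr rfl fun p _ => h1 p]
  have h2 : ∀ p r : Fin n × Fin n,
      (AA G p.1 p.2 * AA G r.1 r.2) * permExp n (fun π => CC t p.1 p.2 π * CC t r.1 r.2 π)
      = (4 * q n t 2 - 8 * q n t 3 + 4 * q n t 4)
            * (AA G p.1 p.2 * AA G r.1 r.2)
        + ((q n t 1 - q n t 2) - (4 * q n t 2 - 8 * q n t 3 + 4 * q n t 4))
            * (AA G p.1 p.2 * AA G r.1 r.2 * dd p.1 r.1
              + AA G p.1 p.2 * AA G r.1 r.2 * dd p.1 r.2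
              + AA G p.1 p.2 * AA G r.1 r.2 * dd p.2 r.1
              + AA G p.1 p.2 * AA G r.1 r.2 * dd p.2 r.2)
        + ((2 * q n t 1 - 2 * q n t 2) - 2 * (q n t 1 - q n t 2)
            + (4 * q n t 2 - 8 * q n t 3 + 4 * q n t 4))
            * (AA G p.1 p.2 * AA G r.1 r.2 * (dd p.1 r.1 * dd p.2 r.2)
              + AA G p.1 p.2 * AA G r.1 r.2 * (dd p.1 r.2 * dd p.2 r.1)) := by
    intro p r
    by_cases hp : G.Adj p.1 p.2
    · by_cases hr : G.Adj r.1 r.2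
      · rw [ECpattern t htn (G.ne_of_adj hp) (G.ne_of_adj hr)]
        ring
      · have : AA G r.1 r.2 = 0 := by rw [AA, if_neg hr]
        rw [this]; ring
    · have : AA G p.1 p.2 = 0 := by rw [AA, if_neg hp]
      rw [this]; ring
  rw [Finset.sum_congr rfl fun p _ => Finset.sum_congr rfl fun r _ => h2 p r]
  simp only [Finset.sum_add_distrib, ← Finset.mul_sum]
  have hA : ∑ p : Fin n × Fin n, AA G p.1 p.2 = 2 * numEdges G := by
    rw [Fintype.sum_prod_type]; exact sum_AA G
  rw [← Finset.sum_mul, hA, L1a, L1b, L1c, L1d, L2a, L2b]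
  ring


/-- Under the permutation null distribution, for `n ≥ 4` and `1 ≤ t ≤ n−1`,
`Var[R_G(t)] = p2(t)·|G| + (p1(t)/2 − p2(t))·Σᵢ|Gᵢ|² + (p2(t) − p1(t)²)·|G|²`. -/
theorem variance_R_one (n : ℕ) (hn : 4 ≤ n) (G : SimpleGraph (Fin n))
    (t : ℕ) (ht1 : 1 ≤ t) (ht2 : t ≤ n - 1) :
    permVar n (Rone G t) =
      p2 n t * numEdges G + (p1 n t / 2 - p2 n t) * degSq G
        + (p2 n t - (p1 n t) ^ 2) * (numEdges G) ^ 2 := by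
  have htn : t ≤ n := le_trans ht2 (Nat.sub_le n 1)
  have hn4 : (4:ℝ) ≤ (n:ℝ) := by exact_mod_cast hn
  have hn0 : (n:ℝ) ≠ 0 := by linarith
  have hn1 : (n:ℝ) - 1 ≠ 0 := by intro h; linarith
  have hn2 : (n:ℝ) - 2 ≠ 0 := by intro h; linarith
  have hn3 : (n:ℝ) - 3 ≠ 0 := by intro h; linarith
  have hE1 : 2 * q n t 1 - 2 * q n t 2 = p1 n t := by
    simp only [q, descFactorial_cast, Finset.prod_range_succ, Finset.prod_range_zero, one_mul,
      Nat.cast_zero, Nat.cast_one, Nat.cast_ofNat, p1]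
    field_simp
    ring
  have hE3 : q n t 1 - q n t 2 = p1 n t / 2 := by
    simp only [q, descFactorial_cast, Finset.prod_range_succ, Finset.prod_range_zero, one_mul,
      Nat.cast_zero, Nat.cast_one, Nat.cast_ofNat, p1]
    field_simp
    ring
  have hE4 : 4 * q n t 2 - 8 * q n t 3 + 4 * q n t 4 = p2 n t := by
    simp only [q, descFactorial_cast, Finset.prod_range_succ, Finset.prod_range_zero, one_mul,
      Nat.cast_zero, Nat.cast_one, Nat.cast_ofNat, p2]
    field_simp
    ring
  rw [permVar_eq, ER2 G t htn, ER G t htn, hE1, hE3, hE4]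
  ring


end GraphCP
end

section
/- Under the permutation null distribution, for n ≥ 4 and 1 ≤ t1 < t2 ≤ n, the variance of the changed-interval between-group edge count satisfies Var[R_G(t1,t2)] = p2(t2−t1)·|G| + (p1(t2−t1)/2 − p2(t2−t1))·Σ_i |G_i|² + (p2(t2−t1) − p1(t2−t1)²)·|G|². -/
open Finset Filter Asymptotics MeasureTheory Topology ProbabilityTheory

namespace GraphCP

variable {n : ℕ}

/-- real indicator of membership in the interval `(t₁, t₂]` of labels. -/
def indR (t₁ t₂ : ℕ) (a : Fin n) : ℝ :=
  if t₁ < (a : ℕ) + 1 ∧ (a : ℕ) + 1 ≤ t₂ then 1 else 0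

def chi (t₁ t₂ : ℕ) (a b : Fin n) : ℝ :=
  indR t₁ t₂ a + indR t₁ t₂ b - 2 * indR t₁ t₂ a * indR t₁ t₂ b

def delta (a b : Fin n) : ℝ := if a = b then 1 else 0

lemma indR_cases (t₁ t₂ : ℕ) (a : Fin n) : indR t₁ t₂ a = 0 ∨ indR t₁ t₂ a = 1 := by
  unfold indR; split_ifs <;> simp

lemma chi_comm (t₁ t₂ : ℕ) (a b : Fin n) : chi t₁ t₂ a b = chi t₁ t₂ b a := by
  unfold chi; ring

lemma chi_self (t₁ t₂ : ℕ) (a : Fin n) : chi t₁ t₂ a a = 0 := by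
  rcases indR_cases t₁ t₂ a with h | h <;> unfold chi <;> rw [h] <;> ring

lemma chi_sq (t₁ t₂ : ℕ) (a b : Fin n) :
    chi t₁ t₂ a b * chi t₁ t₂ a b = chi t₁ t₂ a b := by
  rcases indR_cases t₁ t₂ a with h | h <;> rcases indR_cases t₁ t₂ b with h' | h' <;>
    unfold chi <;> rw [h, h'] <;> ring

lemma chi_mul_indR (t₁ t₂ : ℕ) (a b : Fin n) :
    chi t₁ t₂ a b * indR t₁ t₂ b = indR t₁ t₂ b - indR t₁ t₂ a * indR t₁ t₂ b := by
  rcases indR_cases t₁ t₂ a with h | h <;> rcases indR_cases t₁ t₂ b with h' | h' <;>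
    unfold chi <;> rw [h, h'] <;> ring

lemma sum_indR (t₁ t₂ : ℕ) (ht : t₂ ≤ n) :
    ∑ a : Fin n, indR t₁ t₂ a = ((t₂ - t₁ : ℕ) : ℝ) := by
  unfold indR
  have h1 : ∀ a : Fin n, (if t₁ < (a : ℕ) + 1 ∧ (a : ℕ) + 1 ≤ t₂ then (1:ℝ) else 0)
      = if (a : ℕ) ∈ Finset.Ico t₁ t₂ then 1 else 0 := by
    intro a
    refine if_congr ?_ rfl rfl
    simp only [Finset.mem_Ico]; omega
  rw [Finset.sum_congr rfl fun a _ => h1 a]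
  rw [Fin.sum_univ_eq_sum_range (fun m => if m ∈ Finset.Ico t₁ t₂ then (1:ℝ) else 0)]
  rw [Finset.sum_ite_mem]
  have h2 : Finset.range n ∩ Finset.Ico t₁ t₂ = Finset.Ico t₁ t₂ := by
    ext m; simp only [Finset.mem_inter, Finset.mem_range, Finset.mem_Ico]; omega
  rw [h2, Finset.sum_const, Nat.card_Ico]
  simp

lemma sum_delta_mul (i : Fin n) (F : Fin n → ℝ) : ∑ k : Fin n, delta k i * F k = F i := by
  unfold delta
  rw [Finset.sum_congr rfl (fun k _ => by rw [ite_mul, one_mul, zero_mul])]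
  rw [Finset.sum_ite_eq' Finset.univ i F, if_pos (Finset.mem_univ i)]

/-- extension of matching injective tuples to a permutation -/
lemma exists_perm_comp {k : ℕ} (f g : Fin k → Fin n)
    (hf : Function.Injective f) (hg : Function.Injective g) :
    ∃ σ : Equiv.Perm (Fin n), ∀ m, σ (f m) = g m := by
  induction k with
  | zero => exact ⟨1, fun m => m.elim0⟩
  | succ k ih =>
    obtain ⟨σ, hσ⟩ := ih (f ∘ Fin.succ) (g ∘ Fin.succ)
      (hf.comp (Fin.succ_injective k)) (hg.comp (Fin.succ_injective k))
    refine ⟨(Equiv.swap (σ (f 0)) (g 0)) * σ, ?_⟩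
    intro m
    refine Fin.cases ?_ (fun m => ?_) m
    · simp [Equiv.Perm.mul_apply, Equiv.swap_apply_left]
    · have h1 : σ (f m.succ) = g m.succ := hσ m
      have h2 : g m.succ ≠ σ (f 0) := by
        rw [← h1]
        exact fun h => (hf.ne (Fin.succ_ne_zero m)) (σ.injective h)
      have h3 : g m.succ ≠ g 0 := hg.ne (Fin.succ_ne_zero m)
      simp only [Equiv.Perm.mul_apply, h1]
      exact Equiv.swap_apply_of_ne_of_ne h2 h3

lemma sum_perm_comp_congr {k : ℕ} (F : (Fin k → Fin n) → ℝ) (f g : Fin k → Fin n)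
    (hf : Function.Injective f) (hg : Function.Injective g) :
    ∑ π : Equiv.Perm (Fin n), F (⇑π ∘ f) = ∑ π : Equiv.Perm (Fin n), F (⇑π ∘ g) := by
  obtain ⟨σ, hσ⟩ := exists_perm_comp f g hf hg
  have hfg : ⇑σ ∘ f = g := funext hσ
  calc ∑ π : Equiv.Perm (Fin n), F (⇑π ∘ f)
      = ∑ π : Equiv.Perm (Fin n), F (⇑(π * σ) ∘ f) :=
        (Equiv.sum_comp (Equiv.mulRight σ) (fun π => F (⇑π ∘ f))).symm
    _ = ∑ π : Equiv.Perm (Fin n), F (⇑π ∘ g) := by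
        refine Finset.sum_congr rfl fun π _ => ?_
        congr 1
        rw [← hfg]
        rfl

noncomputable def InjF (k n : ℕ) : Finset (Fin k → Fin n) :=
  Finset.univ.filter Function.Injective

lemma card_InjF (k : ℕ) : (InjF k n).card = n.descFactorial k := by
  classical
  have h1 : (InjF k n).card = Fintype.card {f : Fin k → Fin n // Function.Injective f} := by
    rw [Fintype.card_subtype]
    unfold InjF
    congr 1
  rw [h1, Fintype.card_congr (Equiv.subtypeInjectiveEquivEmbedding (Fin k) (Fin n))]
  simp [Fintype.card_embedding_eq]

/-- The master counting lemma. -/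
lemma sum_perm_comp (k : ℕ) (hk : k ≤ n) (F : (Fin k → Fin n) → ℝ)
    (f : Fin k → Fin n) (hf : Function.Injective f) :
    ∑ π : Equiv.Perm (Fin n), F (⇑π ∘ f) = ((n - k).factorial : ℝ) * ∑ g ∈ InjF k n, F g := by
  classical
  have key : (n.descFactorial k : ℝ) * ∑ π : Equiv.Perm (Fin n), F (⇑π ∘ f)
      = (n.factorial : ℝ) * ∑ g ∈ InjF k n, F g := by
    have h1 : ∀ g ∈ InjF k n, ∑ π : Equiv.Perm (Fin n), F (⇑π ∘ f)
        = ∑ π : Equiv.Perm (Fin n), F (⇑π ∘ g) := by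
      intro g hg
      rw [InjF, Finset.mem_filter] at hg
      exact sum_perm_comp_congr F f g hf hg.2
    calc (n.descFactorial k : ℝ) * ∑ π : Equiv.Perm (Fin n), F (⇑π ∘ f)
        = ∑ g ∈ InjF k n, ∑ π : Equiv.Perm (Fin n), F (⇑π ∘ f) := by
          rw [Finset.sum_const, ← card_InjF (n := n) k, nsmul_eq_mul]
      _ = ∑ g ∈ InjF k n, ∑ π : Equiv.Perm (Fin n), F (⇑π ∘ g) :=
          Finset.sum_congr rfl h1
      _ = ∑ π : Equiv.Perm (Fin n), ∑ g ∈ InjF k n, F (⇑π ∘ g) := Finset.sum_comm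
      _ = ∑ π : Equiv.Perm (Fin n), ∑ g ∈ InjF k n, F g := by
          refine Finset.sum_congr rfl fun π _ => ?_
          refine Finset.sum_nbij' (fun g => ⇑π ∘ g) (fun g => ⇑π⁻¹ ∘ g) ?_ ?_ ?_ ?_ ?_
          · intro g hg
            rw [InjF, Finset.mem_filter] at hg ⊢
            exact ⟨Finset.mem_univ _, π.injective.comp hg.2⟩
          · intro g hg
            rw [InjF, Finset.mem_filter] at hg ⊢
            exact ⟨Finset.mem_univ _, π.symm.injective.comp hg.2⟩
          · intro g _; funext x; simp
          · intro g _; funext x; simp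
          · intro g _
            rfl
      _ = (n.factorial : ℝ) * ∑ g ∈ InjF k n, F g := by
          rw [Finset.sum_const, Finset.card_univ, nsmul_eq_mul]
          congr 2
          simp [Fintype.card_perm]
  have hdesc : (n.descFactorial k : ℝ) ≠ 0 := by
    rw [Nat.cast_ne_zero]
    intro h
    rw [Nat.descFactorial_eq_zero_iff_lt] at h
    omega
  have hfac : (n.factorial : ℝ) = ((n - k).factorial : ℝ) * (n.descFactorial k : ℝ) := by
    rw [← Nat.cast_mul, Nat.factorial_mul_descFactorial hk]
  apply mul_left_cancel₀ hdesc
  rw [key, hfac]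
  ring

lemma sum_pi_succ {k : ℕ} (F : (Fin (k+1) → Fin n) → ℝ) :
    ∑ g : Fin (k+1) → Fin n, F g = ∑ x : Fin n, ∑ g : Fin k → Fin n, F (Fin.cons x g) := by
  rw [← Equiv.sum_comp (Fin.consEquiv (fun _ => Fin n)) F, Fintype.sum_prod_type]
  rfl

lemma sum_pi_zero (F : (Fin 0 → Fin n) → ℝ) :
    ∑ g : Fin 0 → Fin n, F g = F (fun x => x.elim0) := by
  rw [Fintype.sum_unique F]
  exact congrArg F (funext fun x => x.elim0)

lemma inj2_iff (a b : Fin n) (d : Fin 0 → Fin n) :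
    Function.Injective (Fin.cons a (Fin.cons b d) : Fin 2 → Fin n) ↔ a ≠ b := by
  have hd : Function.Injective d := fun x y _ => Subsingleton.elim x y
  simp [Fin.cons_injective_iff, Fin.range_cons, hd]

lemma inj3_iff (a b c : Fin n) (d : Fin 0 → Fin n) :
    Function.Injective (Fin.cons a (Fin.cons b (Fin.cons c d)) : Fin 3 → Fin n) ↔
      a ≠ b ∧ a ≠ c ∧ b ≠ c := by
  have hd : Function.Injective d := fun x y _ => Subsingleton.elim x y
  simp [Fin.cons_injective_iff, Fin.range_cons, hd]
  tauto

lemma inj4_iff (a b c e : Fin n) (d : Fin 0 → Fin n) :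
    Function.Injective (Fin.cons a (Fin.cons b (Fin.cons c (Fin.cons e d))) : Fin 4 → Fin n) ↔
      a ≠ b ∧ a ≠ c ∧ a ≠ e ∧ b ≠ c ∧ b ≠ e ∧ c ≠ e := by
  have hd : Function.Injective d := fun x y _ => Subsingleton.elim x y
  simp [Fin.cons_injective_iff, Fin.range_cons, hd]
  tauto

lemma sum_inj_two (F : Fin n → Fin n → ℝ) :
    ∑ g ∈ InjF 2 n, F (g 0) (g 1)
      = ∑ a : Fin n, ∑ b : Fin n, if a = b then 0 else F a b := by
  classical
  rw [InjF, Finset.sum_filter, sum_pi_succ]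
  refine Finset.sum_congr rfl fun a _ => ?_
  rw [sum_pi_succ]
  refine Finset.sum_congr rfl fun b _ => ?_
  rw [sum_pi_zero]
  simp only [inj2_iff, Fin.cons_zero, Fin.cons_one]
  by_cases h : a = b <;> simp [h]

lemma sum_inj_three (F : Fin n → Fin n → Fin n → ℝ) :
    ∑ g ∈ InjF 3 n, F (g 0) (g 1) (g 2)
      = ∑ a : Fin n, ∑ b : Fin n, ∑ c : Fin n,
          if a ≠ b ∧ a ≠ c ∧ b ≠ c then F a b c else 0 := by
  classical
  rw [InjF, Finset.sum_filter, sum_pi_succ]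
  refine Finset.sum_congr rfl fun a _ => ?_
  rw [sum_pi_succ]
  refine Finset.sum_congr rfl fun b _ => ?_
  rw [sum_pi_succ]
  refine Finset.sum_congr rfl fun c _ => ?_
  rw [sum_pi_zero]
  simp only [inj3_iff, Fin.cons_zero, Fin.cons_one,
    show (2 : Fin 3) = Fin.succ 1 from rfl, Fin.cons_succ]

lemma sum_inj_four (F : Fin n → Fin n → Fin n → Fin n → ℝ) :
    ∑ g ∈ InjF 4 n, F (g 0) (g 1) (g 2) (g 3)
      = ∑ a : Fin n, ∑ b : Fin n, ∑ c : Fin n, ∑ d : Fin n,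
          if a ≠ b ∧ a ≠ c ∧ a ≠ d ∧ b ≠ c ∧ b ≠ d ∧ c ≠ d then F a b c d else 0 := by
  classical
  rw [InjF, Finset.sum_filter, sum_pi_succ]
  refine Finset.sum_congr rfl fun a _ => ?_
  rw [sum_pi_succ]
  refine Finset.sum_congr rfl fun b _ => ?_
  rw [sum_pi_succ]
  refine Finset.sum_congr rfl fun c _ => ?_
  rw [sum_pi_succ]
  refine Finset.sum_congr rfl fun d _ => ?_
  rw [sum_pi_zero]
  simp only [inj4_iff, Fin.cons_zero, Fin.cons_one,
    show (2 : Fin 4) = Fin.succ 1 from rfl, show (3 : Fin 4) = Fin.succ 2 from rfl,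
    show (2 : Fin 3) = Fin.succ 1 from rfl, Fin.cons_succ]

lemma delta_comm (a b : Fin n) : delta a b = delta b a := by
  unfold delta
  by_cases h : a = b <;> simp [h, Ne.symm, eq_comm]

lemma sum_delta_mul' (i : Fin n) (F : Fin n → ℝ) : ∑ k : Fin n, delta i k * F k = F i := by
  rw [Finset.sum_congr rfl (fun k _ => by rw [delta_comm])]
  exact sum_delta_mul i F

variable {t₁ t₂ : ℕ}

lemma sum_chi_row (ht : t₂ ≤ n) (a : Fin n) :
    ∑ b : Fin n, chi t₁ t₂ a b
      = ((t₂ - t₁ : ℕ) : ℝ) + ((n : ℝ) - 2 * ((t₂ - t₁ : ℕ) : ℝ)) * indR t₁ t₂ a := by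
  unfold chi
  rw [Finset.sum_sub_distrib, Finset.sum_add_distrib, ← Finset.mul_sum,
    sum_indR t₁ t₂ ht, Finset.sum_const, Finset.card_univ, Fintype.card_fin, nsmul_eq_mul]
  ring

lemma sum_chi_ind (ht : t₂ ≤ n) (a : Fin n) :
    ∑ b : Fin n, chi t₁ t₂ a b * indR t₁ t₂ b
      = ((t₂ - t₁ : ℕ) : ℝ) * (1 - indR t₁ t₂ a) := by
  rw [Finset.sum_congr rfl (fun b _ => chi_mul_indR t₁ t₂ a b)]
  rw [Finset.sum_sub_distrib, ← Finset.mul_sum, sum_indR t₁ t₂ ht]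
  ring

lemma sum_chi_total (ht : t₂ ≤ n) :
    ∑ a : Fin n, ∑ b : Fin n, chi t₁ t₂ a b
      = 2 * ((t₂ - t₁ : ℕ) : ℝ) * ((n : ℝ) - ((t₂ - t₁ : ℕ) : ℝ)) := by
  rw [Finset.sum_congr rfl (fun a _ => sum_chi_row ht a)]
  rw [Finset.sum_add_distrib, ← Finset.mul_sum, sum_indR t₁ t₂ ht, Finset.sum_const,
    Finset.card_univ, Fintype.card_fin, nsmul_eq_mul]
  ring

lemma sum_row_sq (ht : t₂ ≤ n) :
    ∑ a : Fin n, (∑ b : Fin n, chi t₁ t₂ a b) * (∑ c : Fin n, chi t₁ t₂ a c)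
      = (n : ℝ) * ((t₂ - t₁ : ℕ) : ℝ) * ((n : ℝ) - ((t₂ - t₁ : ℕ) : ℝ)) := by
  have q : ∀ a : Fin n, (∑ b : Fin n, chi t₁ t₂ a b) * (∑ c : Fin n, chi t₁ t₂ a c)
      = ((t₂ - t₁ : ℕ) : ℝ)^2
        + (2 * ((t₂ - t₁ : ℕ) : ℝ) * ((n : ℝ) - 2 * ((t₂ - t₁ : ℕ) : ℝ))
          + ((n : ℝ) - 2 * ((t₂ - t₁ : ℕ) : ℝ))^2) * indR t₁ t₂ a := by
    intro a
    rw [sum_chi_row ht a]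
    rcases indR_cases t₁ t₂ a with h | h <;> rw [h] <;> ring
  rw [Finset.sum_congr rfl (fun a _ => q a)]
  rw [Finset.sum_add_distrib, ← Finset.mul_sum, sum_indR t₁ t₂ ht, Finset.sum_const,
    Finset.card_univ, Fintype.card_fin, nsmul_eq_mul]
  ring

lemma eval_inj_two (ht : t₂ ≤ n) :
    ∑ g ∈ InjF 2 n, chi t₁ t₂ (g 0) (g 1)
      = 2 * ((t₂ - t₁ : ℕ) : ℝ) * ((n : ℝ) - ((t₂ - t₁ : ℕ) : ℝ)) := by
  rw [sum_inj_two (fun a b => chi t₁ t₂ a b)]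
  have h1 : ∀ a b : Fin n, (if a = b then 0 else chi t₁ t₂ a b) = chi t₁ t₂ a b := by
    intro a b
    by_cases h : a = b
    · subst h; simp [chi_self]
    · simp [h]
  rw [Finset.sum_congr rfl (fun a _ => Finset.sum_congr rfl (fun b _ => h1 a b))]
  exact sum_chi_total ht

lemma eval_inj_three (ht : t₂ ≤ n) :
    ∑ g ∈ InjF 3 n, chi t₁ t₂ (g 0) (g 1) * chi t₁ t₂ (g 0) (g 2)
      = ((t₂ - t₁ : ℕ) : ℝ) * ((n : ℝ) - ((t₂ - t₁ : ℕ) : ℝ)) * ((n : ℝ) - 2) := by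
  rw [sum_inj_three (fun a b c => chi t₁ t₂ a b * chi t₁ t₂ a c)]
  have key : ∀ a b c : Fin n,
      (if a ≠ b ∧ a ≠ c ∧ b ≠ c then chi t₁ t₂ a b * chi t₁ t₂ a c else 0)
        = chi t₁ t₂ a b * chi t₁ t₂ a c
          - delta c b * (chi t₁ t₂ a b * chi t₁ t₂ a c) := by
    intro a b c
    unfold delta
    by_cases hab : a = b
    · subst hab; rw [chi_self]; split_ifs <;> ring
    by_cases hac : a = c
    · subst hac; rw [chi_self]; split_ifs <;> ring
    by_cases hbc : b = c
    · subst hbc; simp [hab, chi_sq]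
    · simp [hab, hac, hbc, Ne.symm hbc]
  rw [Finset.sum_congr rfl (fun a _ => Finset.sum_congr rfl (fun b _ =>
    Finset.sum_congr rfl (fun c _ => key a b c)))]
  simp only [Finset.sum_sub_distrib]
  have h1 : ∀ a b : Fin n, ∑ c : Fin n, delta c b * (chi t₁ t₂ a b * chi t₁ t₂ a c)
      = chi t₁ t₂ a b := by
    intro a b
    rw [sum_delta_mul b (fun c => chi t₁ t₂ a b * chi t₁ t₂ a c), chi_sq]
  have h2 : ∀ a : Fin n, ∑ b : Fin n, ∑ c : Fin n, chi t₁ t₂ a b * chi t₁ t₂ a c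
      = (∑ b : Fin n, chi t₁ t₂ a b) * (∑ c : Fin n, chi t₁ t₂ a c) := by
    intro a
    rw [Finset.sum_mul]
    exact Finset.sum_congr rfl (fun b _ => by rw [Finset.mul_sum])
  rw [Finset.sum_congr rfl (fun a _ => Finset.sum_congr rfl (fun b _ => h1 a b)),
    Finset.sum_congr rfl (fun a _ => h2 a)]
  rw [sum_row_sq ht, sum_chi_total ht]
  ring

lemma sum_V (ht : t₂ ≤ n) :
    ∑ a : Fin n, (((t₂ - t₁ : ℕ) : ℝ) + ((n : ℝ) - 2 * ((t₂ - t₁ : ℕ) : ℝ)) * indR t₁ t₂ a)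
      = 2 * ((t₂ - t₁ : ℕ) : ℝ) * ((n : ℝ) - ((t₂ - t₁ : ℕ) : ℝ)) := by
  rw [Finset.sum_add_distrib, ← Finset.mul_sum, sum_indR t₁ t₂ ht, Finset.sum_const,
    Finset.card_univ, Fintype.card_fin, nsmul_eq_mul]
  ring

lemma sum_V_sq (ht : t₂ ≤ n) :
    ∑ a : Fin n, (((t₂ - t₁ : ℕ) : ℝ) + ((n : ℝ) - 2 * ((t₂ - t₁ : ℕ) : ℝ)) * indR t₁ t₂ a)
        * (((t₂ - t₁ : ℕ) : ℝ) + ((n : ℝ) - 2 * ((t₂ - t₁ : ℕ) : ℝ)) * indR t₁ t₂ a)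
      = (n : ℝ) * ((t₂ - t₁ : ℕ) : ℝ) * ((n : ℝ) - ((t₂ - t₁ : ℕ) : ℝ)) := by
  have q : ∀ a : Fin n,
      (((t₂ - t₁ : ℕ) : ℝ) + ((n : ℝ) - 2 * ((t₂ - t₁ : ℕ) : ℝ)) * indR t₁ t₂ a)
        * (((t₂ - t₁ : ℕ) : ℝ) + ((n : ℝ) - 2 * ((t₂ - t₁ : ℕ) : ℝ)) * indR t₁ t₂ a)
      = ((t₂ - t₁ : ℕ) : ℝ)^2
        + (2 * ((t₂ - t₁ : ℕ) : ℝ) * ((n : ℝ) - 2 * ((t₂ - t₁ : ℕ) : ℝ))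
          + ((n : ℝ) - 2 * ((t₂ - t₁ : ℕ) : ℝ))^2) * indR t₁ t₂ a := by
    intro a
    rcases indR_cases t₁ t₂ a with h | h <;> rw [h] <;> ring
  rw [Finset.sum_congr rfl (fun a _ => q a)]
  rw [Finset.sum_add_distrib, ← Finset.mul_sum, sum_indR t₁ t₂ ht, Finset.sum_const,
    Finset.card_univ, Fintype.card_fin, nsmul_eq_mul]
  ring

lemma sum_chi_col (ht : t₂ ≤ n) (b : Fin n) :
    ∑ c : Fin n, chi t₁ t₂ c b
      = ((t₂ - t₁ : ℕ) : ℝ) + ((n : ℝ) - 2 * ((t₂ - t₁ : ℕ) : ℝ)) * indR t₁ t₂ b := by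
  rw [Finset.sum_congr rfl (fun c _ => chi_comm t₁ t₂ c b)]
  exact sum_chi_row ht b

lemma sum_chi_V (ht : t₂ ≤ n) (a : Fin n) :
    ∑ b : Fin n, chi t₁ t₂ a b
        * (((t₂ - t₁ : ℕ) : ℝ) + ((n : ℝ) - 2 * ((t₂ - t₁ : ℕ) : ℝ)) * indR t₁ t₂ b)
      = ((t₂ - t₁ : ℕ) : ℝ)
          * (((t₂ - t₁ : ℕ) : ℝ) + ((n : ℝ) - 2 * ((t₂ - t₁ : ℕ) : ℝ)) * indR t₁ t₂ a)
        + ((n : ℝ) - 2 * ((t₂ - t₁ : ℕ) : ℝ))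
          * (((t₂ - t₁ : ℕ) : ℝ) * (1 - indR t₁ t₂ a)) := by
  have q : ∀ b : Fin n, chi t₁ t₂ a b
        * (((t₂ - t₁ : ℕ) : ℝ) + ((n : ℝ) - 2 * ((t₂ - t₁ : ℕ) : ℝ)) * indR t₁ t₂ b)
      = ((t₂ - t₁ : ℕ) : ℝ) * chi t₁ t₂ a b
        + ((n : ℝ) - 2 * ((t₂ - t₁ : ℕ) : ℝ)) * (chi t₁ t₂ a b * indR t₁ t₂ b) := by
    intro b; ring
  rw [Finset.sum_congr rfl (fun b _ => q b)]
  rw [Finset.sum_add_distrib, ← Finset.mul_sum, ← Finset.mul_sum, sum_chi_row ht a,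
    sum_chi_ind ht a]

lemma termT1 (ht : t₂ ≤ n) :
    ∑ a : Fin n, ∑ b : Fin n, ∑ c : Fin n, ∑ d : Fin n, chi t₁ t₂ a b * chi t₁ t₂ c d
      = (2 * ((t₂ - t₁ : ℕ) : ℝ) * ((n : ℝ) - ((t₂ - t₁ : ℕ) : ℝ)))
        * (2 * ((t₂ - t₁ : ℕ) : ℝ) * ((n : ℝ) - ((t₂ - t₁ : ℕ) : ℝ))) := by
  have h1 : ∀ a b : Fin n, ∑ c : Fin n, ∑ d : Fin n, chi t₁ t₂ a b * chi t₁ t₂ c d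
      = chi t₁ t₂ a b * (2 * ((t₂ - t₁ : ℕ) : ℝ) * ((n : ℝ) - ((t₂ - t₁ : ℕ) : ℝ))) := by
    intro a b
    simp only [← Finset.mul_sum]
    rw [sum_chi_total ht]
  rw [Finset.sum_congr rfl (fun a _ => Finset.sum_congr rfl (fun b _ => h1 a b))]
  simp only [← Finset.sum_mul]
  rw [sum_chi_total ht]

lemma termT2 (ht : t₂ ≤ n) :
    ∑ a : Fin n, ∑ b : Fin n, ∑ c : Fin n, ∑ d : Fin n,
        (delta c a * chi t₁ t₂ a b) * chi t₁ t₂ c d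
      = (n : ℝ) * ((t₂ - t₁ : ℕ) : ℝ) * ((n : ℝ) - ((t₂ - t₁ : ℕ) : ℝ)) := by
  have h1 : ∀ a b : Fin n, ∑ c : Fin n, ∑ d : Fin n,
      (delta c a * chi t₁ t₂ a b) * chi t₁ t₂ c d
      = chi t₁ t₂ a b
        * (((t₂ - t₁ : ℕ) : ℝ) + ((n : ℝ) - 2 * ((t₂ - t₁ : ℕ) : ℝ)) * indR t₁ t₂ a) := by
    intro a b
    have h2 : ∀ c : Fin n, ∑ d : Fin n, (delta c a * chi t₁ t₂ a b) * chi t₁ t₂ c d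
        = delta c a * (chi t₁ t₂ a b
            * (((t₂ - t₁ : ℕ) : ℝ) + ((n : ℝ) - 2 * ((t₂ - t₁ : ℕ) : ℝ)) * indR t₁ t₂ c)) := by
      intro c
      rw [← Finset.mul_sum, sum_chi_row ht c]
      ring
    rw [Finset.sum_congr rfl (fun c _ => h2 c)]
    exact sum_delta_mul a _
  rw [Finset.sum_congr rfl (fun a _ => Finset.sum_congr rfl (fun b _ => h1 a b))]
  have h3 : ∀ a : Fin n, ∑ b : Fin n, chi t₁ t₂ a b
      * (((t₂ - t₁ : ℕ) : ℝ) + ((n : ℝ) - 2 * ((t₂ - t₁ : ℕ) : ℝ)) * indR t₁ t₂ a)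
      = (((t₂ - t₁ : ℕ) : ℝ) + ((n : ℝ) - 2 * ((t₂ - t₁ : ℕ) : ℝ)) * indR t₁ t₂ a)
        * (((t₂ - t₁ : ℕ) : ℝ) + ((n : ℝ) - 2 * ((t₂ - t₁ : ℕ) : ℝ)) * indR t₁ t₂ a) := by
    intro a
    rw [← Finset.sum_mul, sum_chi_row ht a]
  rw [Finset.sum_congr rfl (fun a _ => h3 a)]
  exact sum_V_sq ht

lemma termT3 (ht : t₂ ≤ n) :
    ∑ a : Fin n, ∑ b : Fin n, ∑ c : Fin n, ∑ d : Fin n,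
        chi t₁ t₂ a b * (delta d a * chi t₁ t₂ c d)
      = (n : ℝ) * ((t₂ - t₁ : ℕ) : ℝ) * ((n : ℝ) - ((t₂ - t₁ : ℕ) : ℝ)) := by
  have h1 : ∀ a b : Fin n, ∑ c : Fin n, ∑ d : Fin n,
      chi t₁ t₂ a b * (delta d a * chi t₁ t₂ c d)
      = chi t₁ t₂ a b
        * (((t₂ - t₁ : ℕ) : ℝ) + ((n : ℝ) - 2 * ((t₂ - t₁ : ℕ) : ℝ)) * indR t₁ t₂ a) := by
    intro a b
    have h2 : ∀ c : Fin n, ∑ d : Fin n, chi t₁ t₂ a b * (delta d a * chi t₁ t₂ c d)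
        = chi t₁ t₂ a b * chi t₁ t₂ c a := by
      intro c
      rw [← Finset.mul_sum, sum_delta_mul a (fun d => chi t₁ t₂ c d)]
    rw [Finset.sum_congr rfl (fun c _ => h2 c), ← Finset.mul_sum, sum_chi_col ht a]
  rw [Finset.sum_congr rfl (fun a _ => Finset.sum_congr rfl (fun b _ => h1 a b))]
  have h3 : ∀ a : Fin n, ∑ b : Fin n, chi t₁ t₂ a b
      * (((t₂ - t₁ : ℕ) : ℝ) + ((n : ℝ) - 2 * ((t₂ - t₁ : ℕ) : ℝ)) * indR t₁ t₂ a)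
      = (((t₂ - t₁ : ℕ) : ℝ) + ((n : ℝ) - 2 * ((t₂ - t₁ : ℕ) : ℝ)) * indR t₁ t₂ a)
        * (((t₂ - t₁ : ℕ) : ℝ) + ((n : ℝ) - 2 * ((t₂ - t₁ : ℕ) : ℝ)) * indR t₁ t₂ a) := by
    intro a
    rw [← Finset.sum_mul, sum_chi_row ht a]
  rw [Finset.sum_congr rfl (fun a _ => h3 a)]
  exact sum_V_sq ht

lemma termT4 (ht : t₂ ≤ n) :
    ∑ a : Fin n, ∑ b : Fin n, ∑ c : Fin n, ∑ d : Fin n,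
        (delta c b * chi t₁ t₂ a b) * chi t₁ t₂ c d
      = (n : ℝ) * ((t₂ - t₁ : ℕ) : ℝ) * ((n : ℝ) - ((t₂ - t₁ : ℕ) : ℝ)) := by
  have h1 : ∀ a b : Fin n, ∑ c : Fin n, ∑ d : Fin n,
      (delta c b * chi t₁ t₂ a b) * chi t₁ t₂ c d
      = chi t₁ t₂ a b
        * (((t₂ - t₁ : ℕ) : ℝ) + ((n : ℝ) - 2 * ((t₂ - t₁ : ℕ) : ℝ)) * indR t₁ t₂ b) := by
    intro a b
    have h2 : ∀ c : Fin n, ∑ d : Fin n, (delta c b * chi t₁ t₂ a b) * chi t₁ t₂ c d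
        = delta c b * (chi t₁ t₂ a b
            * (((t₂ - t₁ : ℕ) : ℝ) + ((n : ℝ) - 2 * ((t₂ - t₁ : ℕ) : ℝ)) * indR t₁ t₂ c)) := by
      intro c
      rw [← Finset.mul_sum, sum_chi_row ht c]
      ring
    rw [Finset.sum_congr rfl (fun c _ => h2 c)]
    exact sum_delta_mul b _
  rw [Finset.sum_congr rfl (fun a _ => Finset.sum_congr rfl (fun b _ => h1 a b))]
  rw [Finset.sum_congr rfl (fun a _ => sum_chi_V ht a)]
  rw [Finset.sum_add_distrib, ← Finset.mul_sum, ← Finset.mul_sum, sum_V ht]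
  have h4 : ∑ a : Fin n, ((t₂ - t₁ : ℕ) : ℝ) * (1 - indR t₁ t₂ a)
      = ((t₂ - t₁ : ℕ) : ℝ) * ((n : ℝ) - ((t₂ - t₁ : ℕ) : ℝ)) := by
    rw [← Finset.mul_sum, Finset.sum_sub_distrib, sum_indR t₁ t₂ ht, Finset.sum_const,
      Finset.card_univ, Fintype.card_fin, nsmul_eq_mul, mul_one]
  rw [h4]
  ring

lemma termT5 (ht : t₂ ≤ n) :
    ∑ a : Fin n, ∑ b : Fin n, ∑ c : Fin n, ∑ d : Fin n,
        chi t₁ t₂ a b * (delta d b * chi t₁ t₂ c d)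
      = (n : ℝ) * ((t₂ - t₁ : ℕ) : ℝ) * ((n : ℝ) - ((t₂ - t₁ : ℕ) : ℝ)) := by
  have h1 : ∀ a b : Fin n, ∑ c : Fin n, ∑ d : Fin n,
      chi t₁ t₂ a b * (delta d b * chi t₁ t₂ c d)
      = chi t₁ t₂ a b
        * (((t₂ - t₁ : ℕ) : ℝ) + ((n : ℝ) - 2 * ((t₂ - t₁ : ℕ) : ℝ)) * indR t₁ t₂ b) := by
    intro a b
    have h2 : ∀ c : Fin n, ∑ d : Fin n, chi t₁ t₂ a b * (delta d b * chi t₁ t₂ c d)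
        = chi t₁ t₂ a b * chi t₁ t₂ c b := by
      intro c
      rw [← Finset.mul_sum, sum_delta_mul b (fun d => chi t₁ t₂ c d)]
    rw [Finset.sum_congr rfl (fun c _ => h2 c), ← Finset.mul_sum, sum_chi_col ht b]
  rw [Finset.sum_congr rfl (fun a _ => Finset.sum_congr rfl (fun b _ => h1 a b))]
  rw [Finset.sum_congr rfl (fun a _ => sum_chi_V ht a)]
  rw [Finset.sum_add_distrib, ← Finset.mul_sum, ← Finset.mul_sum, sum_V ht]
  have h4 : ∑ a : Fin n, ((t₂ - t₁ : ℕ) : ℝ) * (1 - indR t₁ t₂ a)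
      = ((t₂ - t₁ : ℕ) : ℝ) * ((n : ℝ) - ((t₂ - t₁ : ℕ) : ℝ)) := by
    rw [← Finset.mul_sum, Finset.sum_sub_distrib, sum_indR t₁ t₂ ht, Finset.sum_const,
      Finset.card_univ, Fintype.card_fin, nsmul_eq_mul, mul_one]
  rw [h4]
  ring

lemma termT6 (ht : t₂ ≤ n) :
    ∑ a : Fin n, ∑ b : Fin n, ∑ c : Fin n, ∑ d : Fin n,
        (delta c a * chi t₁ t₂ a b) * (delta d b * chi t₁ t₂ c d)
      = 2 * ((t₂ - t₁ : ℕ) : ℝ) * ((n : ℝ) - ((t₂ - t₁ : ℕ) : ℝ)) := by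
  have h1 : ∀ a b : Fin n, ∑ c : Fin n, ∑ d : Fin n,
      (delta c a * chi t₁ t₂ a b) * (delta d b * chi t₁ t₂ c d) = chi t₁ t₂ a b := by
    intro a b
    have h2 : ∀ c : Fin n, ∑ d : Fin n,
        (delta c a * chi t₁ t₂ a b) * (delta d b * chi t₁ t₂ c d)
        = delta c a * (chi t₁ t₂ a b * chi t₁ t₂ c b) := by
      intro c
      rw [← Finset.mul_sum, sum_delta_mul b (fun d => chi t₁ t₂ c d)]
      ring
    rw [Finset.sum_congr rfl (fun c _ => h2 c),
      sum_delta_mul a (fun c => chi t₁ t₂ a b * chi t₁ t₂ c b), chi_sq]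
  rw [Finset.sum_congr rfl (fun a _ => Finset.sum_congr rfl (fun b _ => h1 a b))]
  exact sum_chi_total ht

lemma termT7 (ht : t₂ ≤ n) :
    ∑ a : Fin n, ∑ b : Fin n, ∑ c : Fin n, ∑ d : Fin n,
        (delta c b * chi t₁ t₂ a b) * (delta d a * chi t₁ t₂ c d)
      = 2 * ((t₂ - t₁ : ℕ) : ℝ) * ((n : ℝ) - ((t₂ - t₁ : ℕ) : ℝ)) := by
  have h1 : ∀ a b : Fin n, ∑ c : Fin n, ∑ d : Fin n,
      (delta c b * chi t₁ t₂ a b) * (delta d a * chi t₁ t₂ c d) = chi t₁ t₂ a b := by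
    intro a b
    have h2 : ∀ c : Fin n, ∑ d : Fin n,
        (delta c b * chi t₁ t₂ a b) * (delta d a * chi t₁ t₂ c d)
        = delta c b * (chi t₁ t₂ a b * chi t₁ t₂ c a) := by
      intro c
      rw [← Finset.mul_sum, sum_delta_mul a (fun d => chi t₁ t₂ c d)]
      ring
    rw [Finset.sum_congr rfl (fun c _ => h2 c),
      sum_delta_mul b (fun c => chi t₁ t₂ a b * chi t₁ t₂ c a), chi_comm t₁ t₂ b a, chi_sq]
  rw [Finset.sum_congr rfl (fun a _ => Finset.sum_congr rfl (fun b _ => h1 a b))]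
  exact sum_chi_total ht

lemma eval_inj_four (ht : t₂ ≤ n) :
    ∑ g ∈ InjF 4 n, chi t₁ t₂ (g 0) (g 1) * chi t₁ t₂ (g 2) (g 3)
      = 4 * ((t₂ - t₁ : ℕ) : ℝ) * (((t₂ - t₁ : ℕ) : ℝ) - 1)
        * ((n : ℝ) - ((t₂ - t₁ : ℕ) : ℝ)) * ((n : ℝ) - ((t₂ - t₁ : ℕ) : ℝ) - 1) := by
  rw [sum_inj_four (fun a b c d => chi t₁ t₂ a b * chi t₁ t₂ c d)]
  have key : ∀ a b c d : Fin n,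
      (if a ≠ b ∧ a ≠ c ∧ a ≠ d ∧ b ≠ c ∧ b ≠ d ∧ c ≠ d
        then chi t₁ t₂ a b * chi t₁ t₂ c d else 0)
      = chi t₁ t₂ a b * chi t₁ t₂ c d
        - (delta c a * chi t₁ t₂ a b) * chi t₁ t₂ c d
        - chi t₁ t₂ a b * (delta d a * chi t₁ t₂ c d)
        - (delta c b * chi t₁ t₂ a b) * chi t₁ t₂ c d
        - chi t₁ t₂ a b * (delta d b * chi t₁ t₂ c d)
        + (delta c a * chi t₁ t₂ a b) * (delta d b * chi t₁ t₂ c d)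
        + (delta c b * chi t₁ t₂ a b) * (delta d a * chi t₁ t₂ c d) := by
    intro a b c d
    by_cases hab : a = b
    · rw [hab, chi_self]
      split_ifs <;> ring
    by_cases hcd : c = d
    · rw [hcd, chi_self]
      split_ifs <;> ring
    unfold delta
    by_cases hca : c = a <;> by_cases hda : d = a <;> by_cases hcb : c = b <;>
      by_cases hdb : d = b <;> simp_all [ne_comm] <;> try split_ifs <;> try simp_all
  rw [Finset.sum_congr rfl (fun a _ => Finset.sum_congr rfl (fun b _ =>
    Finset.sum_congr rfl (fun c _ => Finset.sum_congr rfl (fun d _ => key a b c d))))]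
  simp only [Finset.sum_add_distrib, Finset.sum_sub_distrib]
  rw [termT1 ht, termT2 ht, termT3 ht, termT4 ht, termT5 ht, termT6 ht, termT7 ht]
  ring

lemma sum_perm_chi2 (hn : 2 ≤ n) (ht : t₂ ≤ n) {i j : Fin n} (hij : i ≠ j) :
    ∑ π : Equiv.Perm (Fin n), chi t₁ t₂ (π i) (π j)
      = ((n-2).factorial : ℝ)
        * (2 * ((t₂ - t₁ : ℕ) : ℝ) * ((n : ℝ) - ((t₂ - t₁ : ℕ) : ℝ))) := by
  have hf : Function.Injective ![i, j] := by
    intro a b hab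
    fin_cases a <;> fin_cases b <;> simp_all
  have h := sum_perm_comp 2 hn (fun g => chi t₁ t₂ (g 0) (g 1)) ![i, j] hf
  simp only [Function.comp_apply, Matrix.cons_val_zero, Matrix.cons_val_one,
    Matrix.head_cons] at h
  rw [h, eval_inj_two ht]

lemma sum_perm_chi3 (hn : 3 ≤ n) (ht : t₂ ≤ n) {x y z : Fin n}
    (hxy : x ≠ y) (hxz : x ≠ z) (hyz : y ≠ z) :
    ∑ π : Equiv.Perm (Fin n), chi t₁ t₂ (π x) (π y) * chi t₁ t₂ (π x) (π z)
      = ((n-3).factorial : ℝ)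
        * (((t₂ - t₁ : ℕ) : ℝ) * ((n : ℝ) - ((t₂ - t₁ : ℕ) : ℝ)) * ((n : ℝ) - 2)) := by
  have hf : Function.Injective ![x, y, z] := by
    intro a b hab
    fin_cases a <;> fin_cases b <;> simp_all
  have h := sum_perm_comp 3 hn (fun g => chi t₁ t₂ (g 0) (g 1) * chi t₁ t₂ (g 0) (g 2))
    ![x, y, z] hf
  have e2 : ![x, y, z] 2 = z := rfl
  simp only [Function.comp_apply, Matrix.cons_val_zero, Matrix.cons_val_one,
    Matrix.head_cons, e2] at h
  rw [h, eval_inj_three ht]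

lemma sum_perm_chi4 (hn : 4 ≤ n) (ht : t₂ ≤ n) {i j k l : Fin n}
    (hij : i ≠ j) (hik : i ≠ k) (hil : i ≠ l) (hjk : j ≠ k) (hjl : j ≠ l) (hkl : k ≠ l) :
    ∑ π : Equiv.Perm (Fin n), chi t₁ t₂ (π i) (π j) * chi t₁ t₂ (π k) (π l)
      = ((n-4).factorial : ℝ)
        * (4 * ((t₂ - t₁ : ℕ) : ℝ) * (((t₂ - t₁ : ℕ) : ℝ) - 1)
          * ((n : ℝ) - ((t₂ - t₁ : ℕ) : ℝ)) * ((n : ℝ) - ((t₂ - t₁ : ℕ) : ℝ) - 1)) := by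
  have hf : Function.Injective ![i, j, k, l] := by
    intro a b hab
    fin_cases a <;> fin_cases b <;> simp_all
  have h := sum_perm_comp 4 hn (fun g => chi t₁ t₂ (g 0) (g 1) * chi t₁ t₂ (g 2) (g 3))
    ![i, j, k, l] hf
  have e2 : ![i, j, k, l] 2 = k := rfl
  have e3 : ![i, j, k, l] 3 = l := rfl
  simp only [Function.comp_apply, Matrix.cons_val_zero, Matrix.cons_val_one,
    Matrix.head_cons, e2, e3] at h
  rw [h, eval_inj_four ht]

noncomputable def wG {n : ℕ} (G : SimpleGraph (Fin n)) (i j : Fin n) : ℝ :=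
  letI : DecidableRel G.Adj := Classical.decRel _
  if G.Adj i j then 1 else 0

variable {G : SimpleGraph (Fin n)}

lemma wG_comm (i j : Fin n) : wG G i j = wG G j i := by
  unfold wG
  split_ifs with h1 h2
  · rfl
  · exact absurd h1.symm h2
  · exact absurd ‹G.Adj j i›.symm h1
  · rfl

lemma wG_sq (i j : Fin n) : wG G i j * wG G i j = wG G i j := by
  unfold wG
  split_ifs <;> norm_num

lemma wG_adj {i j : Fin n} (h : G.Adj i j) : wG G i j = 1 := by
  unfold wG; rw [if_pos h]

lemma wG_not_adj {i j : Fin n} (h : ¬ G.Adj i j) : wG G i j = 0 := by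
  unfold wG; rw [if_neg h]

lemma wG_row (i : Fin n) : ∑ j : Fin n, wG G i j = (deg G i : ℝ) := by
  letI : DecidableRel G.Adj := Classical.decRel _
  unfold wG deg
  rw [Finset.sum_boole]
  congr 1
  have h : (Finset.univ.filter (fun j => G.Adj i j)) = G.neighborFinset i := by
    ext x
    simp [SimpleGraph.mem_neighborFinset]
  rw [h]
  rfl

lemma wG_col (j : Fin n) : ∑ i : Fin n, wG G i j = (deg G j : ℝ) := by
  rw [Finset.sum_congr rfl (fun i _ => wG_comm i j)]
  exact wG_row j

lemma sum_deg_eq (G : SimpleGraph (Fin n)) : ∑ i : Fin n, (deg G i : ℝ) = 2 * numEdges G := by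
  letI : DecidableRel G.Adj := Classical.decRel _
  unfold deg numEdges edgeFS
  rw [← Nat.cast_sum]
  rw [SimpleGraph.sum_degrees_eq_twice_card_edges]
  push_cast
  ring

lemma sum_wG (G : SimpleGraph (Fin n)) : ∑ i : Fin n, ∑ j : Fin n, wG G i j
    = 2 * numEdges G := by
  rw [Finset.sum_congr rfl (fun i _ => wG_row i)]
  exact sum_deg_eq G

lemma termWA : ∑ i : Fin n, ∑ j : Fin n, ∑ k : Fin n, ∑ l : Fin n, wG G i j * wG G k l
    = (2 * numEdges G) * (2 * numEdges G) := by
  have h1 : ∀ i j : Fin n, ∑ k : Fin n, ∑ l : Fin n, wG G i j * wG G k l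
      = wG G i j * (2 * numEdges G) := by
    intro i j
    simp only [← Finset.mul_sum]
    rw [sum_wG G]
  rw [Finset.sum_congr rfl (fun i _ => Finset.sum_congr rfl (fun j _ => h1 i j))]
  simp only [← Finset.sum_mul]
  rw [sum_wG G]

lemma termWB : ∑ i : Fin n, ∑ j : Fin n, ∑ k : Fin n, ∑ l : Fin n,
    (delta k i * wG G i j) * wG G k l = degSq G := by
  have h1 : ∀ i j : Fin n, ∑ k : Fin n, ∑ l : Fin n, (delta k i * wG G i j) * wG G k l
      = wG G i j * (deg G i : ℝ) := by
    intro i j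
    have h2 : ∀ k : Fin n, ∑ l : Fin n, (delta k i * wG G i j) * wG G k l
        = delta k i * (wG G i j * (deg G k : ℝ)) := by
      intro k
      rw [← Finset.mul_sum, wG_row k]
      ring
    rw [Finset.sum_congr rfl (fun k _ => h2 k)]
    exact sum_delta_mul i _
  rw [Finset.sum_congr rfl (fun i _ => Finset.sum_congr rfl (fun j _ => h1 i j))]
  have h3 : ∀ i : Fin n, ∑ j : Fin n, wG G i j * (deg G i : ℝ)
      = (deg G i : ℝ) * (deg G i : ℝ) := by
    intro i
    rw [← Finset.sum_mul, wG_row i]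
  rw [Finset.sum_congr rfl (fun i _ => h3 i)]
  unfold degSq
  exact Finset.sum_congr rfl (fun i _ => by ring)

lemma termWC : ∑ i : Fin n, ∑ j : Fin n, ∑ k : Fin n, ∑ l : Fin n,
    (delta k j * wG G i j) * wG G k l = degSq G := by
  have h1 : ∀ i j : Fin n, ∑ k : Fin n, ∑ l : Fin n, (delta k j * wG G i j) * wG G k l
      = wG G i j * (deg G j : ℝ) := by
    intro i j
    have h2 : ∀ k : Fin n, ∑ l : Fin n, (delta k j * wG G i j) * wG G k l
        = delta k j * (wG G i j * (deg G k : ℝ)) := by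
      intro k
      rw [← Finset.mul_sum, wG_row k]
      ring
    rw [Finset.sum_congr rfl (fun k _ => h2 k)]
    exact sum_delta_mul j _
  rw [Finset.sum_congr rfl (fun i _ => Finset.sum_congr rfl (fun j _ => h1 i j))]
  rw [Finset.sum_comm]
  have h3 : ∀ j : Fin n, ∑ i : Fin n, wG G i j * (deg G j : ℝ)
      = (deg G j : ℝ) * (deg G j : ℝ) := by
    intro j
    rw [← Finset.sum_mul, wG_col j]
  rw [Finset.sum_congr rfl (fun j _ => h3 j)]
  unfold degSq
  exact Finset.sum_congr rfl (fun i _ => by ring)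

lemma termWD : ∑ i : Fin n, ∑ j : Fin n, ∑ k : Fin n, ∑ l : Fin n,
    wG G i j * (delta l i * wG G k l) = degSq G := by
  have h1 : ∀ i j : Fin n, ∑ k : Fin n, ∑ l : Fin n, wG G i j * (delta l i * wG G k l)
      = wG G i j * (deg G i : ℝ) := by
    intro i j
    have h2 : ∀ k : Fin n, ∑ l : Fin n, wG G i j * (delta l i * wG G k l)
        = wG G i j * wG G k i := by
      intro k
      rw [← Finset.mul_sum, sum_delta_mul i (fun l => wG G k l)]
    rw [Finset.sum_congr rfl (fun k _ => h2 k), ← Finset.mul_sum, wG_col i]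
  rw [Finset.sum_congr rfl (fun i _ => Finset.sum_congr rfl (fun j _ => h1 i j))]
  have h3 : ∀ i : Fin n, ∑ j : Fin n, wG G i j * (deg G i : ℝ)
      = (deg G i : ℝ) * (deg G i : ℝ) := by
    intro i
    rw [← Finset.sum_mul, wG_row i]
  rw [Finset.sum_congr rfl (fun i _ => h3 i)]
  unfold degSq
  exact Finset.sum_congr rfl (fun i _ => by ring)

lemma termWE : ∑ i : Fin n, ∑ j : Fin n, ∑ k : Fin n, ∑ l : Fin n,
    wG G i j * (delta l j * wG G k l) = degSq G := by
  have h1 : ∀ i j : Fin n, ∑ k : Fin n, ∑ l : Fin n, wG G i j * (delta l j * wG G k l)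
      = wG G i j * (deg G j : ℝ) := by
    intro i j
    have h2 : ∀ k : Fin n, ∑ l : Fin n, wG G i j * (delta l j * wG G k l)
        = wG G i j * wG G k j := by
      intro k
      rw [← Finset.mul_sum, sum_delta_mul j (fun l => wG G k l)]
    rw [Finset.sum_congr rfl (fun k _ => h2 k), ← Finset.mul_sum, wG_col j]
  rw [Finset.sum_congr rfl (fun i _ => Finset.sum_congr rfl (fun j _ => h1 i j))]
  rw [Finset.sum_comm]
  have h3 : ∀ j : Fin n, ∑ i : Fin n, wG G i j * (deg G j : ℝ)
      = (deg G j : ℝ) * (deg G j : ℝ) := by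
    intro j
    rw [← Finset.sum_mul, wG_col j]
  rw [Finset.sum_congr rfl (fun j _ => h3 j)]
  unfold degSq
  exact Finset.sum_congr rfl (fun i _ => by ring)

lemma termWF : ∑ i : Fin n, ∑ j : Fin n, ∑ k : Fin n, ∑ l : Fin n,
    (delta k i * wG G i j) * (delta l j * wG G k l) = 2 * numEdges G := by
  have h1 : ∀ i j : Fin n, ∑ k : Fin n, ∑ l : Fin n,
      (delta k i * wG G i j) * (delta l j * wG G k l) = wG G i j := by
    intro i j
    have h2 : ∀ k : Fin n, ∑ l : Fin n, (delta k i * wG G i j) * (delta l j * wG G k l)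
        = delta k i * (wG G i j * wG G k j) := by
      intro k
      rw [← Finset.mul_sum, sum_delta_mul j (fun l => wG G k l)]
      ring
    rw [Finset.sum_congr rfl (fun k _ => h2 k),
      sum_delta_mul i (fun k => wG G i j * wG G k j), wG_sq]
  rw [Finset.sum_congr rfl (fun i _ => Finset.sum_congr rfl (fun j _ => h1 i j))]
  exact sum_wG G

lemma termWG : ∑ i : Fin n, ∑ j : Fin n, ∑ k : Fin n, ∑ l : Fin n,
    (delta k j * wG G i j) * (delta l i * wG G k l) = 2 * numEdges G := by
  have h1 : ∀ i j : Fin n, ∑ k : Fin n, ∑ l : Fin n,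
      (delta k j * wG G i j) * (delta l i * wG G k l) = wG G i j := by
    intro i j
    have h2 : ∀ k : Fin n, ∑ l : Fin n, (delta k j * wG G i j) * (delta l i * wG G k l)
        = delta k j * (wG G i j * wG G k i) := by
      intro k
      rw [← Finset.mul_sum, sum_delta_mul i (fun l => wG G k l)]
      ring
    rw [Finset.sum_congr rfl (fun k _ => h2 k),
      sum_delta_mul j (fun k => wG G i j * wG G k i), wG_comm j i, wG_sq]
  rw [Finset.sum_congr rfl (fun i _ => Finset.sum_congr rfl (fun j _ => h1 i j))]
  exact sum_wG G

lemma sum4_const_mul (C : ℝ) (F : Fin n → Fin n → Fin n → Fin n → ℝ) :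
    ∑ i : Fin n, ∑ j : Fin n, ∑ k : Fin n, ∑ l : Fin n, C * F i j k l
      = C * ∑ i : Fin n, ∑ j : Fin n, ∑ k : Fin n, ∑ l : Fin n, F i j k l := by
  simp only [← Finset.mul_sum]

lemma crossInd_gTwo (t₁ t₂ : ℕ) (f : Fin n → Fin n) (i j : Fin n) :
    crossInd (gTwo n t₁ t₂ f) s(i, j) = chi t₁ t₂ (f i) (f j) := by
  unfold crossInd gTwo chi indR
  rw [Sym2.lift_mk]
  by_cases hP : t₁ < (f i : ℕ) + 1 ∧ (f i : ℕ) + 1 ≤ t₂ <;>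
    by_cases hQ : t₁ < (f j : ℕ) + 1 ∧ (f j : ℕ) + 1 ≤ t₂ <;>
    simp only [hP, hQ, decide_true, decide_false, if_true, if_false] <;> norm_num

lemma Rtwo_ordered (t₁ t₂ : ℕ) (π : Equiv.Perm (Fin n)) :
    2 * Rtwo G t₁ t₂ π = ∑ i : Fin n, ∑ j : Fin n, wG G i j * chi t₁ t₂ (π i) (π j) := by
  letI : DecidableRel G.Adj := Classical.decRel _
  have step1 : ∑ i : Fin n, ∑ j : Fin n, wG G i j * chi t₁ t₂ (π i) (π j)
      = ∑ p ∈ Finset.univ.filter (fun p : Fin n × Fin n => G.Adj p.1 p.2),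
          chi t₁ t₂ (π p.1) (π p.2) := by
    rw [Finset.sum_filter, Fintype.sum_prod_type]
    refine Finset.sum_congr rfl fun i _ => Finset.sum_congr rfl fun j _ => ?_
    by_cases h : G.Adj i j
    · rw [wG_adj h, if_pos h, one_mul]
    · rw [wG_not_adj h, if_neg h, zero_mul]
  have step2 : ∑ p ∈ Finset.univ.filter (fun p : Fin n × Fin n => G.Adj p.1 p.2),
      chi t₁ t₂ (π p.1) (π p.2) = ∑ d : G.Dart, crossInd (gTwo n t₁ t₂ ⇑π) d.edge := by
    refine (Finset.sum_bij' (i := fun (d : G.Dart) (_ : d ∈ Finset.univ) => (d.fst, d.snd))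
      (j := fun p hp => SimpleGraph.Dart.mk p (Finset.mem_filter.mp hp).2)
      ?_ ?_ ?_ ?_ ?_).symm
    · intro d _
      simp only [Finset.mem_filter]
      exact ⟨Finset.mem_univ _, d.adj⟩
    · intro p _
      exact Finset.mem_univ _
    · intro d _
      rfl
    · intro p _
      rfl
    · intro d _
      have he : d.edge = s(d.fst, d.snd) := rfl
      rw [he, crossInd_gTwo]
  have hfib := Finset.sum_fiberwise_of_maps_to (s := (Finset.univ : Finset G.Dart))
    (t := G.edgeFinset) (g := fun d : G.Dart => d.edge)
    (fun d _ => SimpleGraph.mem_edgeFinset.mpr d.edge_mem)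
    (fun d => crossInd (gTwo n t₁ t₂ ⇑π) d.edge)
  have step3 : ∑ d : G.Dart, crossInd (gTwo n t₁ t₂ ⇑π) d.edge
      = 2 * Rtwo G t₁ t₂ π := by
    unfold Rtwo edgeFS
    rw [← hfib, Finset.mul_sum]
    refine Finset.sum_congr rfl fun e he => ?_
    have hcard := G.dart_edge_fiber_card e (SimpleGraph.mem_edgeFinset.mp he)
    have hval : ∀ d ∈ Finset.univ.filter (fun d : G.Dart => d.edge = e),
        crossInd (gTwo n t₁ t₂ ⇑π) d.edge = crossInd (gTwo n t₁ t₂ ⇑π) e := by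
      intro d hd
      rw [(Finset.mem_filter.mp hd).2]
    rw [Finset.sum_congr rfl hval, Finset.sum_const, hcard, nsmul_eq_mul]
    norm_num
  rw [step1, step2, step3]

noncomputable def c2v (n t₁ t₂ : ℕ) : ℝ :=
  ((n - 2).factorial : ℝ) * (2 * ((t₂ - t₁ : ℕ) : ℝ) * ((n : ℝ) - ((t₂ - t₁ : ℕ) : ℝ)))

noncomputable def c3v (n t₁ t₂ : ℕ) : ℝ :=
  ((n - 3).factorial : ℝ)
    * (((t₂ - t₁ : ℕ) : ℝ) * ((n : ℝ) - ((t₂ - t₁ : ℕ) : ℝ)) * ((n : ℝ) - 2))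

noncomputable def c4v (n t₁ t₂ : ℕ) : ℝ :=
  ((n - 4).factorial : ℝ)
    * (4 * ((t₂ - t₁ : ℕ) : ℝ) * (((t₂ - t₁ : ℕ) : ℝ) - 1)
      * ((n : ℝ) - ((t₂ - t₁ : ℕ) : ℝ)) * ((n : ℝ) - ((t₂ - t₁ : ℕ) : ℝ) - 1))

lemma key_pointwise (hn : 4 ≤ n) (ht : t₂ ≤ n) {i j k l : Fin n}
    (hij : i ≠ j) (hkl : k ≠ l) :
    ∑ π : Equiv.Perm (Fin n), chi t₁ t₂ (π i) (π j) * chi t₁ t₂ (π k) (π l)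
      = c4v n t₁ t₂
        + (c3v n t₁ t₂ - c4v n t₁ t₂) * (delta k i + delta k j + delta l i + delta l j
            - delta k i * delta l j - delta k j * delta l i)
        + (c2v n t₁ t₂ - c3v n t₁ t₂) * (delta k i * delta l j + delta k j * delta l i) := by
  have hn2 : 2 ≤ n := by omega
  have hn3 : 3 ≤ n := by omega
  by_cases hki : k = i <;> by_cases hkj : k = j <;> by_cases hli : l = i <;>
    by_cases hlj : l = j
  · exact absurd (hki.symm.trans hkj) hij
  · exact absurd (hki.symm.trans hkj) hij
  · exact absurd (hki.symm.trans hkj) hij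
  · exact absurd (hki.symm.trans hkj) hij
  · exact absurd (hki.trans hli.symm) hkl
  · exact absurd (hki.trans hli.symm) hkl
  · -- k = i, l = j
    rw [hki, hlj]
    rw [Finset.sum_congr rfl (fun π _ => chi_sq t₁ t₂ (π i) (π j)),
      sum_perm_chi2 hn2 ht hij]
    simp [delta, hij, Ne.symm hij]
    try unfold c2v
    try unfold c3v
    try unfold c4v
    try ring
  · -- k = i only
    rw [hki]
    rw [sum_perm_chi3 hn3 ht hij (Ne.symm hli) (Ne.symm hlj)]
    simp [delta, hij, Ne.symm hij, hli, hlj]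
    try unfold c2v
    try unfold c3v
    try unfold c4v
    try ring
  · exact absurd (hli.symm.trans hlj) hij
  · -- k = j, l = i
    rw [hkj, hli]
    rw [Finset.sum_congr rfl (fun π _ => by
      rw [chi_comm t₁ t₂ (π j) (π i), chi_sq] :
      ∀ π ∈ (Finset.univ : Finset (Equiv.Perm (Fin n))),
        chi t₁ t₂ (π i) (π j) * chi t₁ t₂ (π j) (π i) = chi t₁ t₂ (π i) (π j)),
      sum_perm_chi2 hn2 ht hij]
    simp [delta, hij, Ne.symm hij]
    try unfold c2v
    try unfold c3v
    try unfold c4v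
    try ring
  · exact absurd (hkj.trans hlj.symm) hkl
  · -- k = j only
    rw [hkj]
    rw [Finset.sum_congr rfl (fun π _ => by
      rw [chi_comm t₁ t₂ (π i) (π j)] :
      ∀ π ∈ (Finset.univ : Finset (Equiv.Perm (Fin n))),
        chi t₁ t₂ (π i) (π j) * chi t₁ t₂ (π j) (π l)
          = chi t₁ t₂ (π j) (π i) * chi t₁ t₂ (π j) (π l)),
      sum_perm_chi3 hn3 ht (Ne.symm hij) (Ne.symm hlj) (Ne.symm hli)]
    simp [delta, hij, Ne.symm hij, hki, hli, hlj]
    try unfold c2v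
    try unfold c3v
    try unfold c4v
    try ring
  · exact absurd (hli.symm.trans hlj) hij
  · -- l = i only
    rw [hli]
    rw [Finset.sum_congr rfl (fun π _ => by
      rw [chi_comm t₁ t₂ (π k) (π i)] :
      ∀ π ∈ (Finset.univ : Finset (Equiv.Perm (Fin n))),
        chi t₁ t₂ (π i) (π j) * chi t₁ t₂ (π k) (π i)
          = chi t₁ t₂ (π i) (π j) * chi t₁ t₂ (π i) (π k)),
      sum_perm_chi3 hn3 ht hij (Ne.symm hki) (Ne.symm hkj)]
    simp [delta, hij, Ne.symm hij, hki, hkj]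
    try unfold c2v
    try unfold c3v
    try unfold c4v
    try ring
  · -- l = j only
    rw [hlj]
    rw [Finset.sum_congr rfl (fun π _ => by
      rw [chi_comm t₁ t₂ (π i) (π j), chi_comm t₁ t₂ (π k) (π j)] :
      ∀ π ∈ (Finset.univ : Finset (Equiv.Perm (Fin n))),
        chi t₁ t₂ (π i) (π j) * chi t₁ t₂ (π k) (π j)
          = chi t₁ t₂ (π j) (π i) * chi t₁ t₂ (π j) (π k)),
      sum_perm_chi3 hn3 ht (Ne.symm hij) (Ne.symm hkj) (Ne.symm hki)]
    simp [delta, hij, Ne.symm hij, hki, hkj, hli]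
    try unfold c2v
    try unfold c3v
    try unfold c4v
    try ring
  · -- all distinct
    rw [sum_perm_chi4 hn ht hij (Ne.symm hki) (Ne.symm hli) (Ne.symm hkj) (Ne.symm hlj) hkl]
    simp [delta, hki, hkj, hli, hlj]
    try unfold c2v
    try unfold c3v
    try unfold c4v
    try ring

lemma first_moment (hn : 4 ≤ n) (ht : t₂ ≤ n) (G : SimpleGraph (Fin n)) :
    ∑ π : Equiv.Perm (Fin n), Rtwo G t₁ t₂ π = c2v n t₁ t₂ * numEdges G := by
  have hn2 : 2 ≤ n := by omega
  have h2 : (2:ℝ) * ∑ π : Equiv.Perm (Fin n), Rtwo G t₁ t₂ π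
      = c2v n t₁ t₂ * (2 * numEdges G) := by
    rw [Finset.mul_sum]
    calc ∑ π : Equiv.Perm (Fin n), 2 * Rtwo G t₁ t₂ π
        = ∑ π : Equiv.Perm (Fin n), ∑ i : Fin n, ∑ j : Fin n,
            wG G i j * chi t₁ t₂ (π i) (π j) :=
          Finset.sum_congr rfl fun π _ => Rtwo_ordered t₁ t₂ π
      _ = ∑ i : Fin n, ∑ π : Equiv.Perm (Fin n), ∑ j : Fin n,
            wG G i j * chi t₁ t₂ (π i) (π j) := Finset.sum_comm
      _ = ∑ i : Fin n, ∑ j : Fin n, ∑ π : Equiv.Perm (Fin n),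
            wG G i j * chi t₁ t₂ (π i) (π j) :=
          Finset.sum_congr rfl fun i _ => Finset.sum_comm
      _ = ∑ i : Fin n, ∑ j : Fin n, wG G i j * c2v n t₁ t₂ := by
          refine Finset.sum_congr rfl fun i _ => Finset.sum_congr rfl fun j _ => ?_
          rw [← Finset.mul_sum]
          by_cases h : G.Adj i j
          · rw [sum_perm_chi2 hn2 ht (G.ne_of_adj h)]
            rfl
          · rw [wG_not_adj h]
            ring
      _ = c2v n t₁ t₂ * (2 * numEdges G) := by
          simp only [← Finset.sum_mul]
          rw [sum_wG G]
          ring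
  linarith

lemma second_moment (hn : 4 ≤ n) (ht : t₂ ≤ n) (G : SimpleGraph (Fin n)) :
    ∑ π : Equiv.Perm (Fin n), Rtwo G t₁ t₂ π * Rtwo G t₁ t₂ π
      = c4v n t₁ t₂ * (numEdges G * numEdges G)
        + (c3v n t₁ t₂ - c4v n t₁ t₂) * (degSq G - numEdges G)
        + (c2v n t₁ t₂ - c3v n t₁ t₂) * numEdges G := by
  have h4 : (4:ℝ) * ∑ π : Equiv.Perm (Fin n), Rtwo G t₁ t₂ π * Rtwo G t₁ t₂ π
      = 4 * (c4v n t₁ t₂ * (numEdges G * numEdges G)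
        + (c3v n t₁ t₂ - c4v n t₁ t₂) * (degSq G - numEdges G)
        + (c2v n t₁ t₂ - c3v n t₁ t₂) * numEdges G) := by
    rw [Finset.mul_sum]
    calc ∑ π : Equiv.Perm (Fin n), 4 * (Rtwo G t₁ t₂ π * Rtwo G t₁ t₂ π)
        = ∑ π : Equiv.Perm (Fin n),
            (2 * Rtwo G t₁ t₂ π) * (2 * Rtwo G t₁ t₂ π) :=
          Finset.sum_congr rfl fun π _ => by ring
      _ = ∑ π : Equiv.Perm (Fin n), ∑ i : Fin n, ∑ j : Fin n, ∑ k : Fin n, ∑ l : Fin n,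
            (wG G i j * chi t₁ t₂ (π i) (π j)) * (wG G k l * chi t₁ t₂ (π k) (π l)) := by
          refine Finset.sum_congr rfl fun π _ => ?_
          rw [Rtwo_ordered t₁ t₂ π, Finset.sum_mul_sum]
          refine Finset.sum_congr rfl fun i _ => ?_
          calc ∑ k : Fin n, (∑ j : Fin n, wG G i j * chi t₁ t₂ (π i) (π j))
                * (∑ l : Fin n, wG G k l * chi t₁ t₂ (π k) (π l))
              = ∑ k : Fin n, ∑ j : Fin n, ∑ l : Fin n,
                  (wG G i j * chi t₁ t₂ (π i) (π j)) * (wG G k l * chi t₁ t₂ (π k) (π l)) :=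
                Finset.sum_congr rfl fun k _ => Finset.sum_mul_sum _ _ _ _
            _ = ∑ j : Fin n, ∑ k : Fin n, ∑ l : Fin n,
                  (wG G i j * chi t₁ t₂ (π i) (π j)) * (wG G k l * chi t₁ t₂ (π k) (π l)) :=
                Finset.sum_comm
      _ = ∑ i : Fin n, ∑ j : Fin n, ∑ k : Fin n, ∑ l : Fin n, ∑ π : Equiv.Perm (Fin n),
            (wG G i j * chi t₁ t₂ (π i) (π j)) * (wG G k l * chi t₁ t₂ (π k) (π l)) := by
          rw [Finset.sum_comm]
          refine Finset.sum_congr rfl fun i _ => ?_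
          rw [Finset.sum_comm]
          refine Finset.sum_congr rfl fun j _ => ?_
          rw [Finset.sum_comm]
          refine Finset.sum_congr rfl fun k _ => ?_
          rw [Finset.sum_comm]
      _ = ∑ i : Fin n, ∑ j : Fin n, ∑ k : Fin n, ∑ l : Fin n,
            (wG G i j * wG G k l)
              * ∑ π : Equiv.Perm (Fin n), chi t₁ t₂ (π i) (π j) * chi t₁ t₂ (π k) (π l) := by
          refine Finset.sum_congr rfl fun i _ => Finset.sum_congr rfl fun j _ =>
            Finset.sum_congr rfl fun k _ => Finset.sum_congr rfl fun l _ => ?_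
          rw [Finset.mul_sum]
          exact Finset.sum_congr rfl fun π _ => by ring
      _ = ∑ i : Fin n, ∑ j : Fin n, ∑ k : Fin n, ∑ l : Fin n,
            (c4v n t₁ t₂ * (wG G i j * wG G k l)
              + (c3v n t₁ t₂ - c4v n t₁ t₂) * ((delta k i * wG G i j) * wG G k l)
              + (c3v n t₁ t₂ - c4v n t₁ t₂) * ((delta k j * wG G i j) * wG G k l)
              + (c3v n t₁ t₂ - c4v n t₁ t₂) * (wG G i j * (delta l i * wG G k l))
              + (c3v n t₁ t₂ - c4v n t₁ t₂) * (wG G i j * (delta l j * wG G k l))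
              - (c3v n t₁ t₂ - c4v n t₁ t₂) * ((delta k i * wG G i j) * (delta l j * wG G k l))
              - (c3v n t₁ t₂ - c4v n t₁ t₂) * ((delta k j * wG G i j) * (delta l i * wG G k l))
              + (c2v n t₁ t₂ - c3v n t₁ t₂) * ((delta k i * wG G i j) * (delta l j * wG G k l))
              + (c2v n t₁ t₂ - c3v n t₁ t₂) * ((delta k j * wG G i j) * (delta l i * wG G k l))) := by
          refine Finset.sum_congr rfl fun i _ => Finset.sum_congr rfl fun j _ =>
            Finset.sum_congr rfl fun k _ => Finset.sum_congr rfl fun l _ => ?_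
          by_cases hij : G.Adj i j
          · by_cases hkl : G.Adj k l
            · rw [key_pointwise hn ht (G.ne_of_adj hij) (G.ne_of_adj hkl)]
              ring
            · rw [wG_not_adj hkl]
              ring
          · rw [wG_not_adj hij]
            ring
      _ = 4 * (c4v n t₁ t₂ * (numEdges G * numEdges G)
            + (c3v n t₁ t₂ - c4v n t₁ t₂) * (degSq G - numEdges G)
            + (c2v n t₁ t₂ - c3v n t₁ t₂) * numEdges G) := by
          simp only [Finset.sum_add_distrib, Finset.sum_sub_distrib]
          rw [sum4_const_mul (c4v n t₁ t₂) (fun i j k l => wG G i j * wG G k l),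
            sum4_const_mul (c3v n t₁ t₂ - c4v n t₁ t₂)
              (fun i j k l => (delta k i * wG G i j) * wG G k l),
            sum4_const_mul (c3v n t₁ t₂ - c4v n t₁ t₂)
              (fun i j k l => (delta k j * wG G i j) * wG G k l),
            sum4_const_mul (c3v n t₁ t₂ - c4v n t₁ t₂)
              (fun i j k l => wG G i j * (delta l i * wG G k l)),
            sum4_const_mul (c3v n t₁ t₂ - c4v n t₁ t₂)
              (fun i j k l => wG G i j * (delta l j * wG G k l)),
            sum4_const_mul (c3v n t₁ t₂ - c4v n t₁ t₂)
              (fun i j k l => (delta k i * wG G i j) * (delta l j * wG G k l)),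
            sum4_const_mul (c3v n t₁ t₂ - c4v n t₁ t₂)
              (fun i j k l => (delta k j * wG G i j) * (delta l i * wG G k l)),
            sum4_const_mul (c2v n t₁ t₂ - c3v n t₁ t₂)
              (fun i j k l => (delta k i * wG G i j) * (delta l j * wG G k l)),
            sum4_const_mul (c2v n t₁ t₂ - c3v n t₁ t₂)
              (fun i j k l => (delta k j * wG G i j) * (delta l i * wG G k l))]
          rw [termWA, termWB, termWC, termWD, termWE, termWF, termWG]
          ring
  linarith

lemma permVar_eq_s3 (m : ℕ) (X : Equiv.Perm (Fin m) → ℝ) :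
    permVar m X = (∑ π : Equiv.Perm (Fin m), X π * X π) / (m.factorial : ℝ)
      - ((∑ π : Equiv.Perm (Fin m), X π) / (m.factorial : ℝ))
        * ((∑ π : Equiv.Perm (Fin m), X π) / (m.factorial : ℝ)) := by
  have hfac : ((m.factorial : ℕ) : ℝ) ≠ 0 := Nat.cast_ne_zero.mpr m.factorial_ne_zero
  have hcard : (((Finset.univ : Finset (Equiv.Perm (Fin m)))).card : ℝ)
      = ((m.factorial : ℕ) : ℝ) := by
    rw [Finset.card_univ]
    norm_cast
    simp [Fintype.card_perm]
  unfold permVar permExp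
  set μ := (∑ π : Equiv.Perm (Fin m), X π) / (m.factorial : ℝ) with hμ
  have hsum : ∑ π : Equiv.Perm (Fin m), X π = (m.factorial : ℝ) * μ := by
    rw [hμ]
    field_simp
  have hexp : ∑ π : Equiv.Perm (Fin m), (X π - μ)^2
      = (∑ π : Equiv.Perm (Fin m), X π * X π) - 2*μ*(∑ π : Equiv.Perm (Fin m), X π)
        + (m.factorial : ℝ)*(μ*μ) := by
    rw [Finset.sum_congr rfl ((fun π _ => by ring) :
      ∀ π ∈ (Finset.univ : Finset (Equiv.Perm (Fin m))),
        (X π - μ)^2 = X π * X π - 2*μ*X π + μ*μ)]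
    rw [Finset.sum_add_distrib, Finset.sum_sub_distrib, ← Finset.mul_sum,
      Finset.sum_const, nsmul_eq_mul, hcard]
  rw [hexp, hsum]
  field_simp
  ring

lemma fact_cast2 (hn : 4 ≤ n) :
    ((n.factorial : ℕ) : ℝ) = (n : ℝ) * ((n : ℝ) - 1) * (((n-2).factorial : ℕ) : ℝ) := by
  obtain ⟨m, rfl⟩ : ∃ m, n = m + 4 := ⟨n - 4, by omega⟩
  rw [show m + 4 - 2 = m + 2 by omega]
  rw [show (m + 4) = (m + 2) + 2 by omega]
  rw [show ((m+2)+2).factorial = ((m+2)+2) * (((m+2)+1) * (m+2).factorial) by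
    rw [Nat.factorial_succ, Nat.factorial_succ]]
  push_cast
  ring

lemma fact_cast3 (hn : 4 ≤ n) :
    ((n.factorial : ℕ) : ℝ)
      = (n : ℝ) * ((n : ℝ) - 1) * ((n : ℝ) - 2) * (((n-3).factorial : ℕ) : ℝ) := by
  obtain ⟨m, rfl⟩ : ∃ m, n = m + 4 := ⟨n - 4, by omega⟩
  rw [show m + 4 - 3 = m + 1 by omega]
  rw [show (m + 4) = (m + 1) + 3 by omega]
  rw [show ((m+1)+3).factorial = ((m+1)+3) * (((m+1)+2) * (((m+1)+1) * (m+1).factorial)) by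
    rw [Nat.factorial_succ, Nat.factorial_succ, Nat.factorial_succ]]
  push_cast
  ring

lemma fact_cast4 (hn : 4 ≤ n) :
    ((n.factorial : ℕ) : ℝ)
      = (n : ℝ) * ((n : ℝ) - 1) * ((n : ℝ) - 2) * ((n : ℝ) - 3)
        * (((n-4).factorial : ℕ) : ℝ) := by
  obtain ⟨m, rfl⟩ : ∃ m, n = m + 4 := ⟨n - 4, by omega⟩
  rw [show m + 4 - 4 = m by omega]
  rw [show (m + 4) = m + 4 by rfl]
  rw [show (m+4).factorial = (m+4) * ((m+3) * ((m+2) * ((m+1) * m.factorial))) by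
    rw [Nat.factorial_succ, Nat.factorial_succ, Nat.factorial_succ, Nat.factorial_succ]]
  push_cast
  ring

lemma c2v_eq (hn : 4 ≤ n) :
    c2v n t₁ t₂ = p1 n (t₂ - t₁) * ((n.factorial : ℕ) : ℝ) := by
  have h4 : (4:ℝ) ≤ (n:ℝ) := by exact_mod_cast hn
  have h0 : (n:ℝ) ≠ 0 := by linarith
  have h1 : (n:ℝ) - 1 ≠ 0 := by linarith
  unfold c2v p1
  rw [fact_cast2 hn]
  field_simp

lemma c3v_eq (hn : 4 ≤ n) :
    c3v n t₁ t₂ = p1 n (t₂ - t₁) / 2 * ((n.factorial : ℕ) : ℝ) := by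
  have h4 : (4:ℝ) ≤ (n:ℝ) := by exact_mod_cast hn
  have h0 : (n:ℝ) ≠ 0 := by linarith
  have h1 : (n:ℝ) - 1 ≠ 0 := by linarith
  unfold c3v p1
  rw [fact_cast3 hn]
  field_simp

lemma c4v_eq (hn : 4 ≤ n) :
    c4v n t₁ t₂ = p2 n (t₂ - t₁) * ((n.factorial : ℕ) : ℝ) := by
  have h4 : (4:ℝ) ≤ (n:ℝ) := by exact_mod_cast hn
  have h0 : (n:ℝ) ≠ 0 := by linarith
  have h1 : (n:ℝ) - 1 ≠ 0 := by linarith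
  have h2 : (n:ℝ) - 2 ≠ 0 := by linarith
  have h3 : (n:ℝ) - 3 ≠ 0 := by linarith
  unfold c4v p2
  rw [fact_cast4 hn]
  field_simp

/-- Under the permutation null distribution, for `n ≥ 4` and `1 ≤ t₁ < t₂ ≤ n`,
`Var[R_G(t₁,t₂)] = p2(t₂−t₁)·|G| + (p1(t₂−t₁)/2 − p2(t₂−t₁))·Σᵢ|Gᵢ|²
  + (p2(t₂−t₁) − p1(t₂−t₁)²)·|G|²`. -/
theorem variance_R_two (n : ℕ) (hn : 4 ≤ n) (G : SimpleGraph (Fin n))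
    (t₁ t₂ : ℕ) (ht1 : 1 ≤ t₁) (ht12 : t₁ < t₂) (ht2 : t₂ ≤ n) :
    permVar n (Rtwo G t₁ t₂) =
      p2 n (t₂ - t₁) * numEdges G + (p1 n (t₂ - t₁) / 2 - p2 n (t₂ - t₁)) * degSq G
        + (p2 n (t₂ - t₁) - (p1 n (t₂ - t₁)) ^ 2) * (numEdges G) ^ 2 := by
  have hfac : ((n.factorial : ℕ) : ℝ) ≠ 0 := Nat.cast_ne_zero.mpr n.factorial_ne_zero
  rw [permVar_eq_s3 n (Rtwo G t₁ t₂)]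
  rw [first_moment hn ht2 G, second_moment hn ht2 G]
  rw [c2v_eq hn, c3v_eq hn, c4v_eq hn]
  field_simp
  ring

end GraphCP
end

section
/- Under the bootstrap distribution, for 1 ≤ t ≤ n−1, the between-group edge count satisfies E_B[R_G(t)] = p1^B(t)·|G| and Var_B[R_G(t)] = p2^B(t)·|G| + (p1^B(t)/2 − p2^B(t))·Σ_i |G_i|², where p1^B(t) = 2t(n−t)/n² and p2^B(t) = 4t²(n−t)²/n⁴. -/
open Finset Filter Asymptotics MeasureTheory Topology ProbabilityTheory

namespace GraphCP

/-- Expectation under the bootstrap distribution: the labels `π(1),…,π(n)` are i.i.d.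
uniform on `{1,…,n}`, i.e. uniform over all `nⁿ` functions `Fin n → Fin n`. -/
noncomputable def bootExp (n : ℕ) (X : (Fin n → Fin n) → ℝ) : ℝ :=
  (∑ f : Fin n → Fin n, X f) / ((n : ℝ) ^ n)

noncomputable def bootVar (n : ℕ) (X : (Fin n → Fin n) → ℝ) : ℝ :=
  bootExp n (fun f => (X f - bootExp n X) ^ 2)

noncomputable def p1B (n t : ℕ) : ℝ := 2 * t * ((n : ℝ) - t) / (n : ℝ) ^ 2

noncomputable def p2B (n t : ℕ) : ℝ := 4 * (t : ℝ) ^ 2 * ((n : ℝ) - t) ^ 2 / (n : ℝ) ^ 4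


/-! ### Auxiliary machinery for the bootstrap moment computation -/

noncomputable def bfun (n t : ℕ) (x : Fin n) : ℝ := if t < (x : ℕ) + 1 then 1 else 0
noncomputable def cfun (n t : ℕ) (x : Fin n) : ℝ := bfun n t x - ((n : ℝ) - t) / n

lemma sum_bfun {n t : ℕ} (ht : t ≤ n) : ∑ x : Fin n, bfun n t x = (n : ℝ) - t := by
  unfold bfun
  rw [Fin.sum_univ_eq_sum_range (fun x => if t < x + 1 then (1:ℝ) else 0) n]
  rw [Finset.sum_boole]
  have h1 : Finset.filter (fun x => t < x + 1) (Finset.range n) = Finset.Ico t n := by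
    ext x; simp [Finset.mem_Ico, Finset.mem_range]; omega
  rw [h1, Nat.card_Ico]
  push_cast [ht]
  ring

lemma sum_cfun {n t : ℕ} (hn : 0 < n) (ht : t ≤ n) : ∑ x : Fin n, cfun n t x = 0 := by
  have hn' : (n : ℝ) ≠ 0 := Nat.cast_ne_zero.mpr hn.ne'
  unfold cfun
  rw [Finset.sum_sub_distrib, sum_bfun ht, Finset.sum_const, Finset.card_univ, Fintype.card_fin,
    nsmul_eq_mul]
  field_simp
  ring

lemma sum_cfun_sq {n t : ℕ} (hn : 0 < n) (ht : t ≤ n) :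
    ∑ x : Fin n, cfun n t x * cfun n t x = (t : ℝ) * ((n : ℝ) - t) / n := by
  have hn' : (n : ℝ) ≠ 0 := Nat.cast_ne_zero.mpr hn.ne'
  have hb : ∀ x : Fin n, bfun n t x * bfun n t x = bfun n t x := by
    intro x; unfold bfun; split <;> norm_num
  have hc : ∀ x : Fin n, cfun n t x * cfun n t x =
      (1 - 2 * (((n : ℝ) - t) / n)) * bfun n t x + (((n : ℝ) - t) / n) ^ 2 := by
    intro x
    unfold cfun
    nlinarith [hb x]
  rw [Finset.sum_congr rfl fun x _ => hc x, Finset.sum_add_distrib, ← Finset.mul_sum,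
    sum_bfun ht, Finset.sum_const, Finset.card_univ, Fintype.card_fin, nsmul_eq_mul]
  field_simp
  ring

lemma key {n : ℕ} (i₀ : Fin n) (φ : Fin n → ℝ) (hφ : ∑ x : Fin n, φ x = 0)
    (A : (Fin n → Fin n) → ℝ) (hA : ∀ f x, A (Function.update f i₀ x) = A f) :
    ∑ f : Fin n → Fin n, A f * φ (f i₀) = 0 := by
  classical
  rw [← Equiv.sum_comp (Equiv.funSplitAt i₀ (Fin n)).symm (fun f => A f * φ (f i₀))]
  rw [Fintype.sum_prod_type]
  have h0 : ∀ (x : Fin n) (g : {j // j ≠ i₀} → Fin n),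
      (Equiv.funSplitAt i₀ (Fin n)).symm (x, g)
        = Function.update ((Equiv.funSplitAt i₀ (Fin n)).symm (i₀, g)) i₀ x := by
    intro x g; funext j
    by_cases h : j = i₀
    · subst h; simp [Equiv.funSplitAt, Equiv.piSplitAt, Function.update]
    · simp [Equiv.funSplitAt, Equiv.piSplitAt, Function.update, h]
  have h1 : ∀ (x : Fin n) (g : {j // j ≠ i₀} → Fin n),
      A ((Equiv.funSplitAt i₀ (Fin n)).symm (x, g))
          * φ (((Equiv.funSplitAt i₀ (Fin n)).symm (x, g)) i₀)
        = A ((Equiv.funSplitAt i₀ (Fin n)).symm (i₀, g)) * φ x := by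
    intro x g
    rw [h0 x g, hA, Function.update_self]
  calc (∑ x : Fin n, ∑ g : {j // j ≠ i₀} → Fin n,
        A ((Equiv.funSplitAt i₀ (Fin n)).symm (x, g))
          * φ (((Equiv.funSplitAt i₀ (Fin n)).symm (x, g)) i₀))
      = ∑ x : Fin n, ∑ g : {j // j ≠ i₀} → Fin n,
        A ((Equiv.funSplitAt i₀ (Fin n)).symm (i₀, g)) * φ x :=
        Finset.sum_congr rfl fun x _ => Finset.sum_congr rfl fun g _ => h1 x g
    _ = ∑ g : {j // j ≠ i₀} → Fin n,
        A ((Equiv.funSplitAt i₀ (Fin n)).symm (i₀, g)) * ∑ x : Fin n, φ x := by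
        rw [Finset.sum_comm]
        exact Finset.sum_congr rfl fun g _ => (Finset.mul_sum _ _ _).symm
    _ = 0 := by rw [hφ]; simp

lemma split {n : ℕ} (hn : 0 < n) (i₀ : Fin n) (φ : Fin n → ℝ)
    (A : (Fin n → Fin n) → ℝ) (hA : ∀ f x, A (Function.update f i₀ x) = A f) :
    ∑ f : Fin n → Fin n, A f * φ (f i₀)
      = ((∑ x : Fin n, φ x) / n) * ∑ f : Fin n → Fin n, A f := by
  have hn' : (n : ℝ) ≠ 0 := Nat.cast_ne_zero.mpr hn.ne'
  have hK := key i₀ (fun x => φ x - (∑ y : Fin n, φ y) / n)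
    (by rw [Finset.sum_sub_distrib, Finset.sum_const, Finset.card_univ, Fintype.card_fin,
          nsmul_eq_mul]
        field_simp
        ring) A hA
  have expand : ∀ f : Fin n → Fin n,
      A f * (φ (f i₀) - (∑ y : Fin n, φ y) / n)
        = A f * φ (f i₀) - ((∑ y : Fin n, φ y) / n) * A f := by intro f; ring
  rw [Finset.sum_congr rfl fun f _ => expand f, Finset.sum_sub_distrib, ← Finset.mul_sum] at hK
  linarith

lemma sum_one_funs {n : ℕ} : ∑ _f : Fin n → Fin n, (1 : ℝ) = (n : ℝ) ^ n := by
  rw [Finset.sum_const, Finset.card_univ, Fintype.card_fun, Fintype.card_fin]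
  simp

section darts
variable {n : ℕ} (G : SimpleGraph (Fin n)) [DecidableRel G.Adj]

lemma sum_dart_fst (w : Fin n → ℝ) :
    ∑ d : G.Dart, w d.fst = ∑ v : Fin n, (G.degree v : ℝ) * w v := by
  rw [← Finset.sum_fiberwise_of_maps_to (g := fun d : G.Dart => d.fst)
      (fun d _ => Finset.mem_univ d.fst) (fun d => w d.fst)]
  refine Finset.sum_congr rfl fun v _ => ?_
  have h1 : ∑ d ∈ Finset.filter (fun d : G.Dart => d.fst = v) Finset.univ, w d.fst
      = ∑ _d ∈ Finset.filter (fun d : G.Dart => d.fst = v) Finset.univ, w v :=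
    Finset.sum_congr rfl fun d hd => by rw [(Finset.mem_filter.mp hd).2]
  rw [h1, Finset.sum_const, G.dart_fst_fiber_card_eq_degree v, nsmul_eq_mul]

lemma sum_dart_snd (w : Fin n → ℝ) :
    ∑ d : G.Dart, w d.snd = ∑ v : Fin n, (G.degree v : ℝ) * w v := by
  rw [← sum_dart_fst G w]
  rw [← Equiv.sum_comp (SimpleGraph.Dart.symm_involutive (G := G)).toPerm
    (fun d : G.Dart => w d.snd)]
  refine Finset.sum_congr rfl fun d _ => ?_
  congr 1

lemma sum_dart_edge (F : Sym2 (Fin n) → ℝ) :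
    ∑ d : G.Dart, F d.edge = 2 * ∑ e ∈ G.edgeFinset, F e := by
  rw [← Finset.sum_fiberwise_of_maps_to (t := G.edgeFinset) (g := fun d : G.Dart => d.edge)
      (fun d _ => by simp [SimpleGraph.mem_edgeFinset, SimpleGraph.Dart.edge_mem])
      (fun d => F d.edge)]
  rw [Finset.mul_sum]
  refine Finset.sum_congr rfl fun e he => ?_
  have h1 : ∑ d ∈ Finset.filter (fun d : G.Dart => d.edge = e) Finset.univ, F d.edge
      = ∑ _d ∈ Finset.filter (fun d : G.Dart => d.edge = e) Finset.univ, F e :=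
    Finset.sum_congr rfl fun d hd => by rw [(Finset.mem_filter.mp hd).2]
  rw [h1, Finset.sum_const, G.dart_edge_fiber_card e (SimpleGraph.mem_edgeFinset.mp he),
    nsmul_eq_mul]
  norm_num

lemma handshake' (w : Fin n → ℝ) :
    ∑ e ∈ G.edgeFinset, (Sym2.lift ⟨fun i j => w i + w j, fun i j => by ring⟩) e
      = ∑ v : Fin n, (G.degree v : ℝ) * w v := by
  have h := sum_dart_edge G (Sym2.lift ⟨fun i j => w i + w j, fun i j => by ring⟩)
  have h2 : ∀ d : G.Dart,
      (Sym2.lift ⟨fun i j => w i + w j, fun i j => by ring⟩) d.edge = w d.fst + w d.snd := by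
    intro d
    rw [SimpleGraph.Dart.edge, Sym2.lift_mk]
  rw [Finset.sum_congr rfl fun d _ => h2 d, Finset.sum_add_distrib,
    sum_dart_fst G w, sum_dart_snd G w] at h
  linarith

end darts

lemma handshake {n : ℕ} (G : SimpleGraph (Fin n)) (w : Fin n → ℝ) :
    ∑ e ∈ edgeFS G, (Sym2.lift ⟨fun i j => w i + w j, fun i j => by ring⟩) e
      = ∑ v : Fin n, (deg G v : ℝ) * w v := by
  letI : DecidableRel G.Adj := Classical.decRel _
  exact handshake' G w

lemma adj_of_mem_edgeFS {n : ℕ} {G : SimpleGraph (Fin n)} {i j : Fin n}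
    (h : s(i, j) ∈ edgeFS G) : G.Adj i j := by
  letI : DecidableRel G.Adj := Classical.decRel _
  simpa [edgeFS, SimpleGraph.mem_edgeFinset] using h

noncomputable def csum {n : ℕ} (t : ℕ) (G : SimpleGraph (Fin n)) (f : Fin n → Fin n) : ℝ :=
  ∑ i : Fin n, (deg G i : ℝ) * cfun n t (f i)

noncomputable def cpr {n : ℕ} (t : ℕ) (f : Fin n → Fin n) : Sym2 (Fin n) → ℝ :=
  Sym2.lift ⟨fun i j => cfun n t (f i) * cfun n t (f j), fun i j => by ring⟩

noncomputable def cedge {n : ℕ} (t : ℕ) (G : SimpleGraph (Fin n)) (f : Fin n → Fin n) : ℝ :=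
  ∑ e ∈ edgeFS G, cpr t f e

lemma hp1 {n t : ℕ} (hn : 0 < n) :
    p1B n t = 2 * (((n : ℝ) - t) / n) * (1 - ((n : ℝ) - t) / n) := by
  have hn' : (n : ℝ) ≠ 0 := Nat.cast_ne_zero.mpr hn.ne'
  unfold p1B; field_simp; ring

lemma crossInd_eq {n t : ℕ} (hn : 0 < n) (f : Fin n → Fin n) (e : Sym2 (Fin n)) :
    crossInd (gOne n t f) e
      = p1B n t + (1 - 2 * (((n : ℝ) - t) / n)) *
          (Sym2.lift ⟨fun i j => cfun n t (f i) + cfun n t (f j), fun i j => by ring⟩) e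
        - 2 * cpr t f e := by
  induction e using Sym2.ind with
  | _ i j =>
    rw [hp1 hn]
    unfold crossInd cpr
    rw [Sym2.lift_mk, Sym2.lift_mk, Sym2.lift_mk]
    simp only [cfun, bfun, gOne]
    by_cases h1 : t < (f i : ℕ) + 1 <;> by_cases h2 : t < (f j : ℕ) + 1 <;>
      simp [h1, h2] <;> ring

lemma decomp {n t : ℕ} (hn : 0 < n) (G : SimpleGraph (Fin n)) (f : Fin n → Fin n) :
    RoneF G t f = p1B n t * numEdges G
      + (1 - 2 * (((n : ℝ) - t) / n)) * csum t G f - 2 * cedge t G f := by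
  unfold RoneF
  rw [Finset.sum_congr rfl fun e _ => crossInd_eq hn f e]
  rw [Finset.sum_sub_distrib, Finset.sum_add_distrib, ← Finset.mul_sum, ← Finset.mul_sum,
    Finset.sum_const, handshake G (fun i => cfun n t (f i))]
  unfold numEdges cedge csum
  rw [nsmul_eq_mul]
  ring

section moments

variable {n t : ℕ}

lemma h_single (hn : 0 < n) (ht : t ≤ n) (i : Fin n) :
    ∑ f : Fin n → Fin n, cfun n t (f i) = 0 := by
  have := key i (cfun n t) (sum_cfun hn ht) (fun _ => 1) (fun _ _ => rfl)
  simpa using this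

lemma h_two (hn : 0 < n) (ht : t ≤ n) {i j : Fin n} (hij : i ≠ j) :
    ∑ f : Fin n → Fin n, cfun n t (f i) * cfun n t (f j) = 0 := by
  have hA : ∀ (f : Fin n → Fin n) (x : Fin n),
      cfun n t (Function.update f j x i) = cfun n t (f i) := by
    intro f x; rw [Function.update_of_ne hij]
  exact key j (cfun n t) (sum_cfun hn ht) (fun f => cfun n t (f i)) hA

lemma h_three (hn : 0 < n) (ht : t ≤ n) {a b c : Fin n} (hb : b ≠ a) (hc : c ≠ a) :
    ∑ f : Fin n → Fin n, cfun n t (f a) * (cfun n t (f b) * cfun n t (f c)) = 0 := by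
  have hA : ∀ (f : Fin n → Fin n) (x : Fin n),
      cfun n t (Function.update f a x b) * cfun n t (Function.update f a x c)
        = cfun n t (f b) * cfun n t (f c) := by
    intro f x; rw [Function.update_of_ne hb, Function.update_of_ne hc]
  have := key a (cfun n t) (sum_cfun hn ht)
    (fun f => cfun n t (f b) * cfun n t (f c)) hA
  rw [← this]
  exact Finset.sum_congr rfl fun f _ => by ring

lemma h_four (hn : 0 < n) (ht : t ≤ n) {a b c d : Fin n}
    (hb : b ≠ a) (hc : c ≠ a) (hd : d ≠ a) :
    ∑ f : Fin n → Fin n,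
      cfun n t (f a) * (cfun n t (f b) * cfun n t (f c) * cfun n t (f d)) = 0 := by
  have hA : ∀ (f : Fin n → Fin n) (x : Fin n),
      cfun n t (Function.update f a x b) * cfun n t (Function.update f a x c)
          * cfun n t (Function.update f a x d)
        = cfun n t (f b) * cfun n t (f c) * cfun n t (f d) := by
    intro f x
    rw [Function.update_of_ne hb, Function.update_of_ne hc, Function.update_of_ne hd]
  have := key a (cfun n t) (sum_cfun hn ht)
    (fun f => cfun n t (f b) * cfun n t (f c) * cfun n t (f d)) hA
  rw [← this]
  exact Finset.sum_congr rfl fun f _ => by ring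

lemma h_diag (hn : 0 < n) (ht : t ≤ n) (i : Fin n) :
    ∑ f : Fin n → Fin n, cfun n t (f i) * cfun n t (f i)
      = (t : ℝ) * ((n : ℝ) - t) / (n : ℝ) ^ 2 * (n : ℝ) ^ n := by
  have hn' : (n : ℝ) ≠ 0 := Nat.cast_ne_zero.mpr hn.ne'
  have h := split hn i (fun x => cfun n t x * cfun n t x) (fun _ => 1) (fun _ _ => rfl)
  simp only [mul_one, one_mul] at h
  rw [h, sum_cfun_sq hn ht, sum_one_funs, div_div, ← pow_two]

lemma h_diag2 (hn : 0 < n) (ht : t ≤ n) {i j : Fin n} (hij : j ≠ i) :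
    ∑ f : Fin n → Fin n,
        (cfun n t (f i) * cfun n t (f i)) * (cfun n t (f j) * cfun n t (f j))
      = ((t : ℝ) * ((n : ℝ) - t) / (n : ℝ) ^ 2) ^ 2 * (n : ℝ) ^ n := by
  have hn' : (n : ℝ) ≠ 0 := Nat.cast_ne_zero.mpr hn.ne'
  have hA : ∀ (f : Fin n → Fin n) (x : Fin n),
      cfun n t (Function.update f i x j) * cfun n t (Function.update f i x j)
        = cfun n t (f j) * cfun n t (f j) := by
    intro f x; rw [Function.update_of_ne hij]
  have h := split hn i (fun x => cfun n t x * cfun n t x)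
    (fun f => cfun n t (f j) * cfun n t (f j)) hA
  have hre : ∑ f : Fin n → Fin n,
      (cfun n t (f i) * cfun n t (f i)) * (cfun n t (f j) * cfun n t (f j))
      = ∑ f : Fin n → Fin n,
      (cfun n t (f j) * cfun n t (f j)) * (cfun n t (f i) * cfun n t (f i)) :=
    Finset.sum_congr rfl fun f _ => by ring
  rw [hre, h, sum_cfun_sq hn ht, h_diag hn ht j, div_div, ← pow_two]
  ring


lemma triple_zero (hn : 0 < n) (ht : t ≤ n) {i j k : Fin n} (hjk : j ≠ k) :
    ∑ f : Fin n → Fin n, cfun n t (f i) * (cfun n t (f j) * cfun n t (f k)) = 0 := by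
  by_cases h1 : i = j
  · subst h1
    rw [← h_three hn ht (a := k) (b := i) (c := i) hjk hjk]
    exact Finset.sum_congr rfl fun f _ => by ring
  · by_cases h2 : i = k
    · subst h2
      rw [← h_three hn ht (a := j) (b := i) (c := i) (Ne.symm hjk) (Ne.symm hjk)]
      exact Finset.sum_congr rfl fun f _ => by ring
    · exact h_three hn ht (Ne.symm h1) (Ne.symm h2)

lemma quad_zero (hn : 0 < n) (ht : t ≤ n) {i j k l : Fin n} (hij : i ≠ j) (hkl : k ≠ l)
    (hne : ¬(s(i, j) = s(k, l))) :
    ∑ f : Fin n → Fin n,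
      (cfun n t (f i) * cfun n t (f j)) * (cfun n t (f k) * cfun n t (f l)) = 0 := by
  rw [Sym2.eq_iff] at hne
  push_neg at hne
  by_cases h1 : i = k
  · have hjl : j ≠ l := hne.1 h1
    have hjk : j ≠ k := by rw [← h1]; exact Ne.symm hij
    rw [← h_four hn ht (a := j) (b := i) (c := k) (d := l) hij (Ne.symm hjk) (Ne.symm hjl)]
    exact Finset.sum_congr rfl fun f _ => by ring
  · by_cases h2 : i = l
    · have hjk : j ≠ k := hne.2 h2
      have hjl : j ≠ l := by rw [← h2]; exact Ne.symm hij
      rw [← h_four hn ht (a := j) (b := i) (c := k) (d := l) hij (Ne.symm hjk) (Ne.symm hjl)]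
      exact Finset.sum_congr rfl fun f _ => by ring
    · rw [← h_four hn ht (a := i) (b := j) (c := k) (d := l) (Ne.symm hij) (Ne.symm h1)
        (Ne.symm h2)]
      exact Finset.sum_congr rfl fun f _ => by ring

lemma M1 (hn : 0 < n) (ht : t ≤ n) (G : SimpleGraph (Fin n)) :
    ∑ f : Fin n → Fin n, csum t G f = 0 := by
  unfold csum
  rw [Finset.sum_comm]
  refine Finset.sum_eq_zero fun i _ => ?_
  rw [← Finset.mul_sum, h_single hn ht i, mul_zero]

lemma M2 (hn : 0 < n) (ht : t ≤ n) (G : SimpleGraph (Fin n)) :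
    ∑ f : Fin n → Fin n, cedge t G f = 0 := by
  unfold cedge
  rw [Finset.sum_comm]
  refine Finset.sum_eq_zero fun e he => ?_
  revert he
  induction e using Sym2.ind with
  | _ i j =>
    intro he
    have hij := (adj_of_mem_edgeFS he).ne
    simp only [cpr, Sym2.lift_mk]
    exact h_two hn ht hij

lemma M3 (hn : 0 < n) (ht : t ≤ n) (G : SimpleGraph (Fin n)) :
    ∑ f : Fin n → Fin n, csum t G f * csum t G f
      = (∑ i : Fin n, (deg G i : ℝ) ^ 2)
          * ((t : ℝ) * ((n : ℝ) - t) / (n : ℝ) ^ 2 * (n : ℝ) ^ n) := by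
  have step : ∀ i j : Fin n,
      (∑ f : Fin n → Fin n,
        ((deg G i : ℝ) * cfun n t (f i)) * ((deg G j : ℝ) * cfun n t (f j)))
      = if i = j then
          (deg G i : ℝ) ^ 2 * ((t : ℝ) * ((n : ℝ) - t) / (n : ℝ) ^ 2 * (n : ℝ) ^ n)
        else 0 := by
    intro i j
    by_cases hij : i = j
    · subst hij
      rw [if_pos rfl]
      have h : ∀ f : Fin n → Fin n,
          ((deg G i : ℝ) * cfun n t (f i)) * ((deg G i : ℝ) * cfun n t (f i))
            = (deg G i : ℝ) ^ 2 * (cfun n t (f i) * cfun n t (f i)) := fun f => by ring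
      rw [Finset.sum_congr rfl fun f _ => h f, ← Finset.mul_sum, h_diag hn ht i]
    · rw [if_neg hij]
      have h : ∀ f : Fin n → Fin n,
          ((deg G i : ℝ) * cfun n t (f i)) * ((deg G j : ℝ) * cfun n t (f j))
            = ((deg G i : ℝ) * (deg G j : ℝ)) * (cfun n t (f i) * cfun n t (f j)) :=
        fun f => by ring
      rw [Finset.sum_congr rfl fun f _ => h f, ← Finset.mul_sum, h_two hn ht hij, mul_zero]
  calc ∑ f : Fin n → Fin n, csum t G f * csum t G f
      = ∑ f : Fin n → Fin n, ∑ i : Fin n, ∑ j : Fin n,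
          ((deg G i : ℝ) * cfun n t (f i)) * ((deg G j : ℝ) * cfun n t (f j)) :=
        Finset.sum_congr rfl fun f _ => Finset.sum_mul_sum _ _ _ _
    _ = ∑ i : Fin n, ∑ j : Fin n, ∑ f : Fin n → Fin n,
          ((deg G i : ℝ) * cfun n t (f i)) * ((deg G j : ℝ) * cfun n t (f j)) := by
        rw [Finset.sum_comm]
        exact Finset.sum_congr rfl fun i _ => Finset.sum_comm
    _ = ∑ i : Fin n, ∑ j : Fin n, (if i = j then
          (deg G i : ℝ) ^ 2 * ((t : ℝ) * ((n : ℝ) - t) / (n : ℝ) ^ 2 * (n : ℝ) ^ n)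
        else 0) :=
        Finset.sum_congr rfl fun i _ => Finset.sum_congr rfl fun j _ => step i j
    _ = ∑ i : Fin n,
          (deg G i : ℝ) ^ 2 * ((t : ℝ) * ((n : ℝ) - t) / (n : ℝ) ^ 2 * (n : ℝ) ^ n) := by
        refine Finset.sum_congr rfl fun i _ => ?_
        rw [Finset.sum_ite_eq Finset.univ i
          (fun _ => (deg G i : ℝ) ^ 2 * ((t : ℝ) * ((n : ℝ) - t) / (n : ℝ) ^ 2 * (n : ℝ) ^ n))]
        rw [if_pos (Finset.mem_univ i)]
    _ = (∑ i : Fin n, (deg G i : ℝ) ^ 2)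
          * ((t : ℝ) * ((n : ℝ) - t) / (n : ℝ) ^ 2 * (n : ℝ) ^ n) := by
        rw [Finset.sum_mul]

lemma M4 (hn : 0 < n) (ht : t ≤ n) (G : SimpleGraph (Fin n)) :
    ∑ f : Fin n → Fin n, csum t G f * cedge t G f = 0 := by
  have step : ∀ i : Fin n, ∀ e ∈ edgeFS G,
      (∑ f : Fin n → Fin n, ((deg G i : ℝ) * cfun n t (f i)) * cpr t f e) = 0 := by
    intro i e
    induction e using Sym2.ind with
    | _ j k =>
      intro he
      have hjk := (adj_of_mem_edgeFS he).ne
      simp only [cpr, Sym2.lift_mk]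
      have h : ∀ f : Fin n → Fin n,
          ((deg G i : ℝ) * cfun n t (f i)) * (cfun n t (f j) * cfun n t (f k))
            = (deg G i : ℝ) * (cfun n t (f i) * (cfun n t (f j) * cfun n t (f k))) :=
        fun f => by ring
      rw [Finset.sum_congr rfl fun f _ => h f, ← Finset.mul_sum,
        triple_zero hn ht hjk, mul_zero]
  calc ∑ f : Fin n → Fin n, csum t G f * cedge t G f
      = ∑ f : Fin n → Fin n, ∑ i : Fin n, ∑ e ∈ edgeFS G,
          ((deg G i : ℝ) * cfun n t (f i)) * cpr t f e :=
        Finset.sum_congr rfl fun f _ => Finset.sum_mul_sum _ _ _ _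
    _ = ∑ i : Fin n, ∑ e ∈ edgeFS G, ∑ f : Fin n → Fin n,
          ((deg G i : ℝ) * cfun n t (f i)) * cpr t f e := by
        rw [Finset.sum_comm]
        exact Finset.sum_congr rfl fun i _ => Finset.sum_comm
    _ = 0 := by
        refine Finset.sum_eq_zero fun i _ => Finset.sum_eq_zero fun e he => ?_
        exact step i e he

lemma M5 (hn : 0 < n) (ht : t ≤ n) (G : SimpleGraph (Fin n)) :
    ∑ f : Fin n → Fin n, cedge t G f * cedge t G f
      = numEdges G * (((t : ℝ) * ((n : ℝ) - t) / (n : ℝ) ^ 2) ^ 2 * (n : ℝ) ^ n) := by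
  have step : ∀ (i j k l : Fin n), G.Adj i j → G.Adj k l →
      (∑ f : Fin n → Fin n, cpr t f s(i, j) * cpr t f s(k, l))
        = if s(i, j) = s(k, l) then
            ((t : ℝ) * ((n : ℝ) - t) / (n : ℝ) ^ 2) ^ 2 * (n : ℝ) ^ n
          else 0 := by
    intro i j k l hij hkl
    by_cases heq : s(i, j) = s(k, l)
    · rw [if_pos heq, ← heq]
      simp only [cpr, Sym2.lift_mk]
      rw [← h_diag2 hn ht hij.ne']
      exact Finset.sum_congr rfl fun f _ => by ring
    · rw [if_neg heq]
      simp only [cpr, Sym2.lift_mk]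
      exact quad_zero hn ht hij.ne hkl.ne heq
  have step' : ∀ e ∈ edgeFS G, ∀ e' ∈ edgeFS G,
      (∑ f : Fin n → Fin n, cpr t f e * cpr t f e')
        = if e = e' then
            ((t : ℝ) * ((n : ℝ) - t) / (n : ℝ) ^ 2) ^ 2 * (n : ℝ) ^ n
          else 0 := by
    intro e he e' he'
    revert he he'
    induction e using Sym2.ind with
    | _ i j =>
      induction e' using Sym2.ind with
      | _ k l =>
        intro he he'
        exact step i j k l (adj_of_mem_edgeFS he) (adj_of_mem_edgeFS he')
  calc ∑ f : Fin n → Fin n, cedge t G f * cedge t G f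
      = ∑ f : Fin n → Fin n, ∑ e ∈ edgeFS G, ∑ e' ∈ edgeFS G, cpr t f e * cpr t f e' :=
        Finset.sum_congr rfl fun f _ => Finset.sum_mul_sum _ _ _ _
    _ = ∑ e ∈ edgeFS G, ∑ e' ∈ edgeFS G, ∑ f : Fin n → Fin n, cpr t f e * cpr t f e' := by
        rw [Finset.sum_comm]
        exact Finset.sum_congr rfl fun e _ => Finset.sum_comm
    _ = ∑ e ∈ edgeFS G, ∑ e' ∈ edgeFS G, (if e = e' then
          ((t : ℝ) * ((n : ℝ) - t) / (n : ℝ) ^ 2) ^ 2 * (n : ℝ) ^ n else 0) :=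
        Finset.sum_congr rfl fun e he => Finset.sum_congr rfl fun e' he' => step' e he e' he'
    _ = ∑ e ∈ edgeFS G, ((t : ℝ) * ((n : ℝ) - t) / (n : ℝ) ^ 2) ^ 2 * (n : ℝ) ^ n := by
        refine Finset.sum_congr rfl fun e he => ?_
        rw [Finset.sum_ite_eq (edgeFS G) e
          (fun _ => ((t : ℝ) * ((n : ℝ) - t) / (n : ℝ) ^ 2) ^ 2 * (n : ℝ) ^ n)]
        rw [if_pos he]
    _ = numEdges G * (((t : ℝ) * ((n : ℝ) - t) / (n : ℝ) ^ 2) ^ 2 * (n : ℝ) ^ n) := by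
        rw [Finset.sum_const, nsmul_eq_mul]
        rfl

lemma sum_const_funs (K : ℝ) : ∑ _f : Fin n → Fin n, K = (n : ℝ) ^ n * K := by
  rw [Finset.sum_const, Finset.card_univ, Fintype.card_fun, Fintype.card_fin, nsmul_eq_mul]
  push_cast
  ring


end moments

/-- Under the bootstrap distribution, `E_B[R_G(t)] = p₁ᴮ(t)·|G|` and
`Var_B[R_G(t)] = p₂ᴮ(t)·|G| + (p₁ᴮ(t)/2 − p₂ᴮ(t))·Σᵢ|Gᵢ|²`, where
`p₁ᴮ(t) = 2t(n−t)/n²` and `p₂ᴮ(t) = 4t²(n−t)²/n⁴`. -/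
theorem bootstrap_moments_R_one (n : ℕ) (hn : 0 < n) (G : SimpleGraph (Fin n))
    (t : ℕ) (ht1 : 1 ≤ t) (ht2 : t ≤ n - 1) :
    bootExp n (RoneF G t) = p1B n t * numEdges G ∧
      bootVar n (RoneF G t) = p2B n t * numEdges G + (p1B n t / 2 - p2B n t) * degSq G := by
  have ht : t ≤ n := by omega
  have hn' : (n : ℝ) ≠ 0 := Nat.cast_ne_zero.mpr hn.ne'
  have hNne : (n : ℝ) ^ n ≠ 0 := pow_ne_zero _ hn'
  have hsum : ∑ f : Fin n → Fin n, RoneF G t f = p1B n t * numEdges G * (n : ℝ) ^ n := by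
    rw [Finset.sum_congr rfl fun f _ => decomp hn G f]
    rw [Finset.sum_sub_distrib, Finset.sum_add_distrib, sum_const_funs (p1B n t * numEdges G),
      ← Finset.mul_sum, ← Finset.mul_sum, M1 hn ht G, M2 hn ht G]
    ring
  have hexp : bootExp n (RoneF G t) = p1B n t * numEdges G := by
    unfold bootExp
    rw [hsum, mul_div_cancel_right₀ _ hNne]
  refine ⟨hexp, ?_⟩
  have e1 : 4 * ((t : ℝ) * ((n : ℝ) - t) / (n : ℝ) ^ 2) ^ 2 = p2B n t := by
    unfold p2B
    field_simp
  have e2 : (1 - 2 * (((n : ℝ) - t) / n)) ^ 2 * ((t : ℝ) * ((n : ℝ) - t) / (n : ℝ) ^ 2)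
      = p1B n t / 2 - p2B n t := by
    unfold p1B p2B
    field_simp
    ring
  have hptw : ∀ f : Fin n → Fin n, (RoneF G t f - p1B n t * numEdges G) ^ 2
      = (1 - 2 * (((n : ℝ) - t) / n)) ^ 2 * (csum t G f * csum t G f)
        - 4 * (1 - 2 * (((n : ℝ) - t) / n)) * (csum t G f * cedge t G f)
        + 4 * (cedge t G f * cedge t G f) := by
    intro f
    rw [decomp hn G f]
    ring
  unfold bootVar
  simp only [hexp]
  unfold bootExp
  rw [Finset.sum_congr rfl fun f _ => hptw f]
  rw [Finset.sum_add_distrib, Finset.sum_sub_distrib, ← Finset.mul_sum, ← Finset.mul_sum,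
    ← Finset.mul_sum, M3 hn ht G, M4 hn ht G, M5 hn ht G]
  have hfin : (1 - 2 * (((n : ℝ) - t) / n)) ^ 2
        * ((∑ i : Fin n, (deg G i : ℝ) ^ 2)
            * ((t : ℝ) * ((n : ℝ) - t) / (n : ℝ) ^ 2 * (n : ℝ) ^ n))
      - 4 * (1 - 2 * (((n : ℝ) - t) / n)) * 0
      + 4 * (numEdges G * (((t : ℝ) * ((n : ℝ) - t) / (n : ℝ) ^ 2) ^ 2 * (n : ℝ) ^ n))
      = (p2B n t * numEdges G + (p1B n t / 2 - p2B n t) * degSq G) * (n : ℝ) ^ n := by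
    rw [← e2, ← e1]
    unfold degSq
    ring
  rw [hfin, mul_div_cancel_right₀ _ hNne]

end GraphCP
end
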